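/- arXiv:1703.01403 — 9 statements merged into one kernel-verified Lean document; each statement's English description precedes it below -/
import Mathlib

section
/- Let E : ℂ → ℂ be entire and suppose there exist constants C, C' > 0 and ρ ∈ [0,1) such that |E(z)| ≤ C·exp(C'·|z|^ρ) for all z ∈ ℂ (i.e. E has order less than one). If E(it) → 0 as t → +∞ and as t → −∞ along the real axis, then E(λ) = 0 for every λ ∈ ℂ. -/
open Complex

/-- Lemma 3.2: an entire function of order less than one that tends to `0` along the
imaginary axis in both directions vanishes identically. -/
theorem entire_order_lt_one_vanishing
    (E : ℂ → ℂ) (hE : Differentiable ℂ E)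
    (C C' ρ : ℝ) (hC : 0 < C) (hC' : 0 < C') (hρ : ρ ∈ Set.Ico (0:ℝ) 1)
    (hbound : ∀ z : ℂ, ‖E z‖ ≤ C * Real.exp (C' * ‖z‖ ^ ρ))
    (htop : Filter.Tendsto (fun t : ℝ => E (I * t)) Filter.atTop (nhds 0))
    (hbot : Filter.Tendsto (fun t : ℝ => E (I * t)) Filter.atBot (nhds 0)) :
    ∀ lam : ℂ, E lam = 0 := by
  -- Step 1: `E` is bounded on the imaginary axis.
  obtain ⟨T, hT⟩ : ∃ T : ℝ, ∀ t ≥ T, ‖E (I * t)‖ ≤ 1 := by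
    have := (htop.eventually (Metric.ball_mem_nhds (0:ℂ) one_pos)).exists_forall_of_atTop
    simpa [dist_eq_norm] using
      ((Filter.eventually_atTop.1 (htop.eventually (Metric.ball_mem_nhds (0:ℂ) one_pos))).imp
        fun T h t ht => (h t ht).le)
  obtain ⟨T', hT'⟩ : ∃ T' : ℝ, ∀ t ≤ T', ‖E (I * t)‖ ≤ 1 := by
    simpa [dist_eq_norm] using
      ((Filter.eventually_atBot.1 (hbot.eventually (Metric.ball_mem_nhds (0:ℂ) one_pos))).imp
        fun T h t ht => (h t ht).le)
  obtain ⟨M, hM⟩ : ∃ M : ℝ, ∀ t ∈ Set.Icc T' T, ‖E (I * t)‖ ≤ M := by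
    rcases (isCompact_Icc (a := T') (b := T)).exists_bound_of_continuousOn
        ((hE.continuous.comp (by continuity : Continuous fun t : ℝ => I * t)).continuousOn) with
      ⟨M, hM⟩
    exact ⟨M, fun t ht => hM t ht⟩
  set B : ℝ := max M 1 with hB
  have haxis : ∀ t : ℝ, ‖E (I * t)‖ ≤ B := by
    intro t
    rcases le_total t T' with h | h
    · exact (hT' t h).trans (le_max_right _ _)
    rcases le_total t T with h2 | h2
    · exact (hM t ⟨h, h2⟩).trans (le_max_left _ _)
    · exact (hT t h2).trans (le_max_right _ _)
  -- Step 2: Phragmén–Lindelöf for `g z = E (I * z ^ 2)` on the upper half plane.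
  set g : ℂ → ℂ := fun z => E (I * z ^ 2) with hg
  have hgd : Differentiable ℂ g :=
    hE.comp ((differentiable_const I).mul (differentiable_pow 2))
  have hgO : ∀ s : Set ℂ,
      g =O[Bornology.cobounded ℂ ⊓ Filter.principal s]
        fun z => Real.exp (C' * ‖z‖ ^ (2 * ρ)) := by
    intro s
    apply Asymptotics.IsBigO.of_bound C
    filter_upwards with z
    have h1 : ‖I * z ^ 2‖ = ‖z‖ ^ (2 : ℕ) := by
      simp [norm_pow]
    have h2 : ‖I * z ^ 2‖ ^ ρ = ‖z‖ ^ (2 * ρ) := by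
      rw [h1, ← Real.rpow_natCast ‖z‖ 2, ← Real.rpow_mul (norm_nonneg z)]
      norm_num
    have := hbound (I * z ^ 2)
    rw [h2] at this
    calc ‖g z‖ ≤ C * Real.exp (C' * ‖z‖ ^ (2 * ρ)) := this
      _ = C * ‖Real.exp (C' * ‖z‖ ^ (2 * ρ))‖ := by
          rw [Real.norm_of_nonneg (Real.exp_pos _).le]
  have h2ρ : 2 * ρ < 2 := by nlinarith [hρ.1, hρ.2]
  have hre : ∀ x : ℝ, ‖g (x : ℂ)‖ ≤ B := by
    intro x
    show ‖E (I * (x : ℂ) ^ 2)‖ ≤ B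
    have : ((x : ℂ)) ^ 2 = ((x ^ 2 : ℝ) : ℂ) := by push_cast; ring
    rw [this]
    exact haxis (x ^ 2)
  have him : ∀ x : ℝ, ‖g ((x : ℂ) * I)‖ ≤ B := by
    intro x
    show ‖E (I * ((x : ℂ) * I) ^ 2)‖ ≤ B
    have : ((x : ℂ) * I) ^ 2 = ((-(x ^ 2) : ℝ) : ℂ) := by
      rw [mul_pow, I_sq]; push_cast; ring
    rw [this]
    exact haxis (-(x ^ 2))
  have hupper : ∀ z : ℂ, 0 ≤ z.im → ‖g z‖ ≤ B := by
    intro z hzim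
    rcases le_total 0 z.re with hzre | hzre
    · exact PhragmenLindelof.quadrant_I hgd.diffContOnCl
        ⟨2 * ρ, h2ρ, C', hgO _⟩ (fun x _ => hre x) (fun x _ => him x) hzre hzim
    · exact PhragmenLindelof.quadrant_II hgd.diffContOnCl
        ⟨2 * ρ, h2ρ, C', hgO _⟩ (fun x _ => hre x) (fun x _ => him x) hzre hzim
  -- Step 3: every complex number is `I * z ^ 2` with `z` in the upper half plane.
  have hbddE : ∀ w : ℂ, ‖E w‖ ≤ B := by
    intro w
    obtain ⟨z, hz⟩ := IsAlgClosed.exists_pow_nat_eq (k := ℂ) (-I * w) zero_lt_two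
    have hw : I * z ^ 2 = w := by
      rw [hz]; rw [show I * (-I * w) = (-(I*I)) * w by ring]; simp [I_mul_I]
    rcases le_total 0 z.im with h | h
    · have h1 := hupper z h
      have h2 : g z = E w := congrArg E hw
      rwa [h2] at h1
    · have h1 := hupper (-z) (by simpa using neg_nonneg.2 h)
      have h2 : g (-z) = E w := by
        show E (I * (-z) ^ 2) = E w
        rw [show (-z) ^ 2 = z ^ 2 by ring, hw]
      rwa [h2] at h1
  -- Step 4: Liouville, then take the limit.
  have hconst : ∀ a b : ℂ, E a = E b := by
    intro a b
    refine hE.apply_eq_apply_of_bounded ?_ a b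
    exact (Metric.isBounded_iff_subset_closedBall 0).2
      ⟨B, fun x ⟨w, hw⟩ => by simpa [hw.symm, mem_closedBall_zero_iff] using hbddE w⟩
  intro lam
  have : Filter.Tendsto (fun _ : ℝ => E lam) Filter.atTop (nhds 0) := by
    have heq : (fun t : ℝ => E (I * t)) = fun _ : ℝ => E lam := by
      funext t; exact (hconst lam (I * t)).symm
    rwa [heq] at htop
  exact tendsto_nhds_unique tendsto_const_nhds this
end

section
/- Let b > 0, let K : ℝ × ℝ → ℝ be measurable and bounded, and let Q ∈ L²(0,b) be real-valued. If Q(t) + ∫_t^b K(x,t)·Q(x) dx = 0 for almost every t ∈ (0,b), then Q = 0 almost everywhere on (0,b). (A homogeneous Volterra integral equation of the second kind with bounded kernel has only the zero solution.) -/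
open MeasureTheory

/-- A homogeneous Volterra integral equation of the second kind with bounded measurable
kernel has only the zero solution. -/
theorem volterra_homogeneous_zero
    (b : ℝ) (hb : 0 < b) (K : ℝ → ℝ → ℝ)
    (hKmeas : Measurable (Function.uncurry K)) (M : ℝ) (hKbd : ∀ x t : ℝ, |K x t| ≤ M)
    (Q : ℝ → ℝ) (hQ : MemLp Q 2 (volume.restrict (Set.Ioo 0 b)))
    (heq : ∀ᵐ t ∂(volume.restrict (Set.Ioo 0 b)),
      Q t + ∫ x in Set.Ioo t b, K x t * Q x = 0) :
    ∀ᵐ t ∂(volume.restrict (Set.Ioo 0 b)), Q t = 0 := by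
  have hM : 0 ≤ M := le_trans (abs_nonneg _) (hKbd 0 0)
  haveI : IsFiniteMeasure (volume.restrict (Set.Ioo 0 b)) := by
    constructor
    rw [Measure.restrict_apply_univ, Real.volume_Ioo]
    exact ENNReal.ofReal_lt_top
  have hQint : IntegrableOn Q (Set.Ioo 0 b) volume :=
    (hQ.mono_exponent (by norm_num : (1:ENNReal) ≤ 2)).integrable le_rfl
  -- the truncated absolute value of Q
  set g : ℝ → ℝ := (Set.Ioo 0 b).indicator (fun x => |Q x|) with hg_def
  have hg_nonneg : ∀ x, 0 ≤ g x := fun x =>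
    Set.indicator_nonneg (fun y _ => abs_nonneg _) x
  have hg_int : Integrable g volume :=
    IntegrableOn.integrable_indicator hQint.abs measurableSet_Ioo
  set F : ℝ → ℝ := fun t => ∫ x in Set.Ioi t, g x with hF_def
  have hF_nonneg : ∀ t, 0 ≤ F t := fun t =>
    setIntegral_nonneg measurableSet_Ioi (fun x _ => hg_nonneg x)
  set C : ℝ := ∫ x, g x with hC_def
  have hF_le_C : ∀ t, F t ≤ C := fun t =>
    setIntegral_le_integral hg_int (Filter.Eventually.of_forall hg_nonneg)
  have hF_anti : Antitone F := by
    intro s t hst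
    exact setIntegral_mono_set hg_int.integrableOn
      (Filter.Eventually.of_forall hg_nonneg)
      (HasSubset.Subset.eventuallyLE (Set.Ioi_subset_Ioi hst))
  have hF_meas : Measurable F := hF_anti.measurable
  have hF_eq : ∀ t : ℝ, 0 ≤ t → F t = ∫ x in Set.Ioo t b, |Q x| := by
    intro t ht
    have hset : Set.Ioi t ∩ Set.Ioo 0 b = Set.Ioo t b := by
      ext x
      simp only [Set.mem_inter_iff, Set.mem_Ioi, Set.mem_Ioo]
      constructor
      · rintro ⟨h1, _, h3⟩; exact ⟨h1, h3⟩
      · rintro ⟨h1, h2⟩; exact ⟨h1, lt_of_le_of_lt ht h1, h2⟩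
    rw [hF_def]
    simp only [hg_def]
    rw [setIntegral_indicator measurableSet_Ioo, hset]
  -- F is integrable on any Ioo t b
  have hF_intOn : ∀ t : ℝ, IntegrableOn F (Set.Ioo t b) volume := by
    intro t
    apply Integrable.mono' (integrable_const C)
      (hF_meas.aestronglyMeasurable.restrict)
    refine Filter.Eventually.of_forall fun x => ?_
    rw [Real.norm_eq_abs, abs_of_nonneg (hF_nonneg x)]
    exact hF_le_C x
  have hQabs_intOn : ∀ t : ℝ, 0 ≤ t → IntegrableOn (fun x => |Q x|) (Set.Ioo t b) volume := by
    intro t ht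
    exact (hQint.mono_set (Set.Ioo_subset_Ioo ht le_rfl)).abs
  -- a.e. pointwise bound |Q t| ≤ M * F t
  have hbound : ∀ᵐ t ∂(volume.restrict (Set.Ioo 0 b)), |Q t| ≤ M * F t := by
    filter_upwards [heq, ae_restrict_mem measurableSet_Ioo] with t ht htmem
    have hQt : Q t = -∫ x in Set.Ioo t b, K x t * Q x := by linarith
    have h1 : |Q t| ≤ ∫ x in Set.Ioo t b, |K x t * Q x| := by
      rw [hQt, abs_neg]
      simpa only [Real.norm_eq_abs] using
        norm_integral_le_integral_norm (μ := volume.restrict (Set.Ioo t b))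
          (fun x => K x t * Q x)
    have h2 : (∫ x in Set.Ioo t b, |K x t * Q x|) ≤ ∫ x in Set.Ioo t b, M * |Q x| := by
      apply integral_mono_of_nonneg
      · exact Filter.Eventually.of_forall fun x => abs_nonneg _
      · exact (hQabs_intOn t htmem.1.le).const_mul M
      · refine Filter.Eventually.of_forall fun x => ?_
        show |K x t * Q x| ≤ M * |Q x|
        rw [abs_mul]
        exact mul_le_mul_of_nonneg_right (hKbd x t) (abs_nonneg _)
    calc |Q t| ≤ ∫ x in Set.Ioo t b, M * |Q x| := le_trans h1 h2
      _ = M * ∫ x in Set.Ioo t b, |Q x| := integral_const_mul M _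
      _ = M * F t := by rw [hF_eq t htmem.1.le]
  -- the Gronwall-type iteration
  have hiter : ∀ n : ℕ, ∀ t ∈ Set.Icc 0 b, F t ≤ C * (M * (b - t)) ^ n / n.factorial := by
    intro n
    induction n with
    | zero =>
      intro t _
      simpa using hF_le_C t
    | succ n ih =>
      intro t ht
      have hFt : F t ≤ M * ∫ x in Set.Ioo t b, F x := by
        rw [hF_eq t ht.1]
        have : (∫ x in Set.Ioo t b, |Q x|) ≤ ∫ x in Set.Ioo t b, M * F x := by
          apply integral_mono_ae (hQabs_intOn t ht.1) ((hF_intOn t).const_mul M)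
          have hsub : volume.restrict (Set.Ioo t b) ≤ volume.restrict (Set.Ioo 0 b) :=
            Measure.restrict_mono (Set.Ioo_subset_Ioo ht.1 le_rfl) le_rfl
          exact Filter.Eventually.filter_mono (Measure.ae_le_iff_absolutelyContinuous.mpr
            hsub.absolutelyContinuous) hbound
        rw [integral_const_mul] at this
        exact this
      have hstep : (∫ x in Set.Ioo t b, F x) ≤
          ∫ x in Set.Ioo t b, C * (M * (b - x)) ^ n / n.factorial := by
        apply setIntegral_mono_on (hF_intOn t) _ measurableSet_Ioo
        · intro x hx
          exact ih x ⟨le_trans ht.1 hx.1.le, hx.2.le⟩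
        · apply Integrable.mono' (integrable_const (C * (M * b) ^ n / n.factorial))
          · apply AEStronglyMeasurable.restrict
            apply Measurable.aestronglyMeasurable
            fun_prop
          · rw [ae_restrict_iff' measurableSet_Ioo]
            refine Filter.Eventually.of_forall fun x hx => ?_
            have hC0 : 0 ≤ C := le_trans (hF_nonneg 0) (hF_le_C 0)
            have hx1 : 0 ≤ b - x := by linarith [hx.2]
            have hx0 : 0 < x := lt_of_le_of_lt ht.1 hx.1
            have hpow : (M * (b - x)) ^ n ≤ (M * b) ^ n := by
              apply pow_le_pow_left₀ (mul_nonneg hM hx1)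
              apply mul_le_mul_of_nonneg_left (by linarith) hM
            rw [Real.norm_eq_abs, abs_div,
              abs_of_nonneg (by positivity : (0:ℝ) ≤ (n.factorial:ℝ)),
              abs_of_nonneg (by positivity : (0:ℝ) ≤ C * (M * (b - x)) ^ n)]
            apply div_le_div_of_nonneg_right _ (by positivity)
            exact mul_le_mul_of_nonneg_left hpow hC0
      have hcomp : (∫ x in Set.Ioo t b, C * (M * (b - x)) ^ n / n.factorial)
          = C * M ^ n / n.factorial * ((b - t) ^ (n + 1) / (n + 1)) := by
        have h1 : ∀ x : ℝ, C * (M * (b - x)) ^ n / n.factorial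
            = (C * M ^ n / n.factorial) * (b - x) ^ n := by
          intro x; rw [mul_pow]; ring
        simp_rw [h1]
        rw [integral_const_mul]
        congr 1
        rw [← integral_Ioc_eq_integral_Ioo, ← intervalIntegral.integral_of_le ht.2]
        rw [intervalIntegral.integral_comp_sub_left (fun u => u ^ n) b, sub_self]
        rw [integral_pow]
        push_cast
        ring
      calc F t ≤ M * ∫ x in Set.Ioo t b, F x := hFt
        _ ≤ M * (C * M ^ n / n.factorial * ((b - t) ^ (n + 1) / (n + 1))) := by
            rw [← hcomp]
            exact mul_le_mul_of_nonneg_left hstep hM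
        _ = C * (M * (b - t)) ^ (n + 1) / (n + 1).factorial := by
            rw [mul_pow, Nat.factorial_succ]
            push_cast
            field_simp
            ring
  -- conclude F 0 = 0
  have hF0 : F 0 = 0 := by
    have h1 : ∀ n : ℕ, F 0 ≤ C * ((M * b) ^ n / n.factorial) := by
      intro n
      have := hiter n 0 ⟨le_rfl, hb.le⟩
      simpa [mul_div_assoc] using this
    have h2 : Filter.Tendsto (fun n : ℕ => C * ((M * b) ^ n / n.factorial))
        Filter.atTop (nhds 0) := by
      have := FloorSemiring.tendsto_pow_div_factorial_atTop (M * b)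
      simpa using this.const_mul C
    exact le_antisymm (ge_of_tendsto' h2 h1) (hF_nonneg 0)
  have habs : (∫ x in Set.Ioo 0 b, |Q x|) = 0 := by
    rw [← hF_eq 0 le_rfl]; exact hF0
  have := (integral_eq_zero_iff_of_nonneg_ae
    (Filter.Eventually.of_forall fun x => abs_nonneg (Q x)) hQint.abs).mp habs
  filter_upwards [this] with t ht
  exact abs_eq_zero.mp ht
end

section
/- Let b ∈ [3/4, 1], let Q ∈ L²(0,b) be real-valued, let K : ℝ × ℝ → ℝ be measurable and bounded, and let A₂, A₃, A₄ ∈ ℝ with A₂ ≠ 0. Define F on [0,b] piecewise by: F(t) = Q(t) + 2A₃·Q(t + 1/2) for t ∈ [0, 1−b]; F(t) = Q(t) + 2A₃·Q(t + 1/2) + 2A₄·Q(1 − t) for t ∈ (1−b, b − 1/2]; F(t) = Q(t) + 2A₄·Q(1 − t) for t ∈ (b − 1/2, 1/2]; F(t) = 2A₂·Q(t) for t ∈ (1/2, b]. If F(t) + ∫_t^b K(x,t)·Q(x) dx = 0 for almost every t ∈ (0,b), then Q = 0 almost everywhere on (0,b). -/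
open MeasureTheory

lemma ae_ne_const (c : ℝ) : ∀ᵐ t : ℝ, t ≠ c := by
  have : volume ({c} : Set ℝ) = 0 := measure_singleton c
  rw [ae_iff]; simpa using this

/-- Volterra-type vanishing lemma. -/
lemma volterra_aux (f : ℝ → ℝ) (a c d C : ℝ) (hC : 0 ≤ C) (hf : Integrable f)
    (hsupp : ∀ x, x ∉ Set.Ioo a c → f x = 0)
    (hb : ∀ᵐ t : ℝ, t ∈ Set.Ioo a c → |f t| ≤ C * ∫ x in Set.Ioo t d, |f x|) :
    ∀ᵐ t : ℝ, f t = 0 := by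
  set δ : ℝ := 1 / (2 * (C + 1)) with hδdef
  have hδpos : 0 < δ := by positivity
  have hCδ : C * δ ≤ 1 / 2 := by
    rw [hδdef, mul_one_div, div_le_div_iff₀ (by positivity) (by norm_num)]
    nlinarith
  have key : ∀ n : ℕ, ∀ᵐ t : ℝ, t ∈ Set.Ioi (c - n * δ) → f t = 0 := by
    intro n
    induction n with
    | zero =>
      filter_upwards with t ht
      apply hsupp
      simp only [Nat.cast_zero, zero_mul, sub_zero, Set.mem_Ioi] at ht
      intro h
      exact absurd h.2 (not_lt.2 ht.le)
    | succ n ih =>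
      set c₁ : ℝ := c - n * δ with hc₁
      set c₀ : ℝ := c₁ - δ with hc₀
      have hc₀c₁ : c₀ < c₁ := by simp [hc₀, hδpos]
      set g : ℝ → ℝ := (Set.Ioo c₀ c₁).indicator (fun x => |f x|) with hg
      have hgint : Integrable g := hf.norm.indicator measurableSet_Ioo
      set J : ℝ := ∫ x in Set.Ioo c₀ c₁, |f x| with hJ
      have hJnn : 0 ≤ J := setIntegral_nonneg measurableSet_Ioo (fun x _ => abs_nonneg _)
      have hintg : ∫ x, g x = J := by
        rw [hg, integral_indicator measurableSet_Ioo]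
      have hintEq : ∀ t : ℝ, c₀ ≤ t → (∫ x in Set.Ioo t d, |f x|) ≤ J := by
        intro t ht
        have h1 : (∫ x in Set.Ioo t d, |f x|) = ∫ x in Set.Ioo t d, g x := by
          apply setIntegral_congr_ae measurableSet_Ioo
          filter_upwards [ih, ae_ne_const c₁] with x hx hxne hmem
          rcases lt_or_gt_of_ne hxne with h | h
          · rw [hg, Set.indicator_of_mem (Set.mem_Ioo.2 ⟨lt_of_le_of_lt ht hmem.1, h⟩)]
          · have : f x = 0 := hx h
            rw [hg, Set.indicator_of_notMem (by simp [h.le, Set.mem_Ioo, not_lt.2 h.le]), this,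
              abs_zero]
        rw [h1, ← hintg]
        exact setIntegral_le_integral hgint
          (Filter.Eventually.of_forall fun x => Set.indicator_nonneg (fun y _ => abs_nonneg _) x)
      have hbd : ∀ᵐ t : ℝ, t ∈ Set.Ioo c₀ c₁ → |f t| ≤ C * J := by
        filter_upwards [hb] with t ht hmem
        by_cases hta : t ∈ Set.Ioo a c
        · exact le_trans (ht hta) (mul_le_mul_of_nonneg_left (hintEq t hmem.1.le) hC)
        · rw [hsupp t hta, abs_zero]; positivity
      have hJle : J ≤ (C * δ) * J := by
        have h2 : J ≤ ∫ _x in Set.Ioo c₀ c₁, C * J := by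
          rw [hJ]
          apply integral_mono_ae (hf.norm.restrict)
            (integrableOn_const measure_Ioo_lt_top.ne)
          exact (ae_restrict_iff' measurableSet_Ioo).2 hbd
        have h3 : (∫ _x in Set.Ioo c₀ c₁, C * J) = δ * (C * J) := by
          rw [setIntegral_const, measureReal_def, Real.volume_Ioo, smul_eq_mul,
            ENNReal.toReal_ofReal (by linarith : (0:ℝ) ≤ c₁ - c₀)]
          have : c₁ - c₀ = δ := by rw [hc₀]; ring
          rw [this]
        rw [h3] at h2; linarith [h2]
      have hJ0 : J = 0 := by nlinarith
      have hzero : ∀ᵐ x : ℝ, x ∈ Set.Ioo c₀ c₁ → f x = 0 := by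
        have h := (integral_eq_zero_iff_of_nonneg (fun x => abs_nonneg (f x))
          (hf.norm.restrict (s := Set.Ioo c₀ c₁))).1
        have h2 := h (by rw [← hJ]; exact hJ0)
        have h3 := (ae_restrict_iff' measurableSet_Ioo).1 h2
        filter_upwards [h3] with x hx hmem
        simpa using abs_eq_zero.1 (by simpa using hx hmem)
      filter_upwards [ih, hzero, ae_ne_const c₁] with t h1 h2 h3 hmem
      have hmem' : c₀ < t := by
        have : c - (n + 1 : ℕ) * δ = c₀ := by rw [hc₀, hc₁]; push_cast; ring
        rw [Set.mem_Ioi, this] at hmem; exact hmem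
      rcases lt_or_gt_of_ne h3 with h | h
      · exact h2 ⟨hmem', h⟩
      · exact h1 h
  obtain ⟨n, hn⟩ := exists_nat_gt ((c - a) / δ)
  have hna : c - n * δ < a := by
    rw [div_lt_iff₀ hδpos] at hn; linarith
  filter_upwards [key n] with t ht
  by_cases h : c - n * δ < t
  · exact ht h
  · exact hsupp t (fun hmem => absurd hmem.1 (not_lt.2 (by linarith [not_lt.1 h])))

/-- The piecewise-reflection step of the proof of Lemma 3.1, case `b ∈ [3/4, 1]`:
if `F(t) + ∫_t^b K(x,t) Q(x) dx = 0` a.e. with the indicated piecewise `F`, then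
`Q = 0` a.e. on `(0,b)`. -/
theorem piecewise_volterra_case_b_ge
    (b : ℝ) (hb : b ∈ Set.Icc (3/4 : ℝ) 1)
    (Q : ℝ → ℝ) (hQ : MemLp Q 2 (volume.restrict (Set.Ioo 0 b)))
    (K : ℝ → ℝ → ℝ) (hKmeas : Measurable (Function.uncurry K))
    (M : ℝ) (hKbd : ∀ x t : ℝ, |K x t| ≤ M)
    (A₂ A₃ A₄ : ℝ) (hA₂ : A₂ ≠ 0)
    (heq : ∀ᵐ t ∂(volume.restrict (Set.Ioo 0 b)),
      (if t ≤ 1 - b then Q t + 2 * A₃ * Q (t + 1/2)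
       else if t ≤ b - 1/2 then Q t + 2 * A₃ * Q (t + 1/2) + 2 * A₄ * Q (1 - t)
       else if t ≤ 1/2 then Q t + 2 * A₄ * Q (1 - t)
       else 2 * A₂ * Q t) + ∫ x in Set.Ioo t b, K x t * Q x = 0) :
    ∀ᵐ t ∂(volume.restrict (Set.Ioo 0 b)), Q t = 0 := by
  obtain ⟨hb34, hb1⟩ := hb
  have hM : 0 ≤ M := le_trans (abs_nonneg _) (hKbd 0 0)
  haveI : IsFiniteMeasure (volume.restrict (Set.Ioo 0 b)) :=
    ⟨by rw [Measure.restrict_apply_univ]; exact measure_Ioo_lt_top⟩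
  have hQint : IntegrableOn Q (Set.Ioo 0 b) volume := by
    rw [IntegrableOn, ← memLp_one_iff_integrable]
    exact hQ.mono_exponent (by norm_num)
  have heq' := (ae_restrict_iff' measurableSet_Ioo).1 heq
  -- the integral term bound
  have hbound : ∀ t ∈ Set.Ioo (0:ℝ) b,
      |∫ x in Set.Ioo t b, K x t * Q x| ≤ M * ∫ x in Set.Ioo t b, |Q x| := by
    intro t ht
    have hsub : Set.Ioo t b ⊆ Set.Ioo 0 b := Set.Ioo_subset_Ioo ht.1.le le_rfl
    calc |∫ x in Set.Ioo t b, K x t * Q x| ≤ ∫ x in Set.Ioo t b, |K x t| * |Q x| := by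
          simpa [Real.norm_eq_abs, abs_mul] using
            norm_integral_le_integral_norm (μ := volume.restrict (Set.Ioo t b))
              (fun x => K x t * Q x)
      _ ≤ ∫ x in Set.Ioo t b, M * |Q x| := by
          apply integral_mono_of_nonneg
            (Filter.Eventually.of_forall fun x => mul_nonneg (abs_nonneg _) (abs_nonneg _))
            ((hQint.mono_set hsub).norm.const_mul M)
          apply Filter.Eventually.of_forall; intro x
          exact mul_le_mul_of_nonneg_right (hKbd x t) (abs_nonneg _)
      _ = M * ∫ x in Set.Ioo t b, |Q x| := integral_const_mul _ _
  -- Step 1: Q = 0 a.e. on (1/2, b)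
  set f₁ : ℝ → ℝ := (Set.Ioo (1/2 : ℝ) b).indicator Q with hf₁
  have hf₁int : Integrable f₁ :=
    (hQint.mono_set (Set.Ioo_subset_Ioo (by linarith) le_rfl)).integrable_indicator
      measurableSet_Ioo
  set C₁ : ℝ := M / (2 * |A₂|) with hC₁
  have hA₂' : (0:ℝ) < 2 * |A₂| := by positivity
  have hC₁nn : 0 ≤ C₁ := div_nonneg hM hA₂'.le
  have hQ1' : ∀ᵐ t : ℝ, t ∈ Set.Ioo (1/2 : ℝ) b → Q t = 0 := by
    have := volterra_aux f₁ (1/2) b b C₁ hC₁nn hf₁int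
      (fun x hx => Set.indicator_of_notMem hx Q) ?_
    · filter_upwards [this] with t ht hmem
      rwa [hf₁, Set.indicator_of_mem hmem] at ht
    · filter_upwards [heq'] with t ht hmem
      have htb : t ∈ Set.Ioo (0:ℝ) b := ⟨by linarith [hmem.1], hmem.2⟩
      have h0 := ht htb
      rw [if_neg (by push_neg; linarith [hmem.1] : ¬(t ≤ 1 - b)),
        if_neg (by push_neg; linarith [hmem.1] : ¬(t ≤ b - 1/2)),
        if_neg (by push_neg; exact hmem.1 : ¬(t ≤ 1/2))] at h0
    -- h0 : 2*A₂*Q t + ∫ = 0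
      have hIeq : (∫ x in Set.Ioo t b, |f₁ x|) = ∫ x in Set.Ioo t b, |Q x| := by
        apply setIntegral_congr_fun (measurableSet_Ioo)
        intro x hx
        have hxm : x ∈ Set.Ioo (1/2:ℝ) b := ⟨lt_trans hmem.1 hx.1, hx.2⟩
        show |f₁ x| = |Q x|
        rw [hf₁, Set.indicator_of_mem hxm]
      have habs : 2 * |A₂| * |Q t| ≤ M * ∫ x in Set.Ioo t b, |Q x| := by
        have h1 : 2 * A₂ * Q t = -(∫ x in Set.Ioo t b, K x t * Q x) := by linarith
        have h2 : |2 * A₂ * Q t| = |∫ x in Set.Ioo t b, K x t * Q x| := by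
          rw [h1, abs_neg]
        rw [abs_mul, abs_mul, abs_two] at h2
        rw [h2]
        exact hbound t htb
      rw [hf₁, Set.indicator_of_mem hmem, hIeq, hC₁, div_mul_eq_mul_div,
        le_div_iff₀ hA₂']
      nlinarith [habs]
  -- translated vanishing facts
  have hshift : ∀ᵐ t : ℝ, (t + 1/2) ∈ Set.Ioo (1/2:ℝ) b → Q (t + 1/2) = 0 :=
    (measurePreserving_add_right volume (1/2:ℝ)).quasiMeasurePreserving.ae hQ1'
  have hrefl : ∀ᵐ t : ℝ, (1 - t) ∈ Set.Ioo (1/2:ℝ) b → Q (1 - t) = 0 :=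
    (Measure.measurePreserving_sub_left volume (1:ℝ)).quasiMeasurePreserving.ae hQ1'
  -- Step 2: Q = 0 a.e. on (0, 1/2)
  set f₂ : ℝ → ℝ := (Set.Ioo (0 : ℝ) (1/2)).indicator Q with hf₂
  have hf₂int : Integrable f₂ :=
    (hQint.mono_set (Set.Ioo_subset_Ioo le_rfl (by linarith))).integrable_indicator
      measurableSet_Ioo
  have hQ2' : ∀ᵐ t : ℝ, t ∈ Set.Ioo (0:ℝ) (1/2) → Q t = 0 := by
    have := volterra_aux f₂ 0 (1/2) b M hM hf₂int
      (fun x hx => Set.indicator_of_notMem hx Q) ?_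
    · filter_upwards [this] with t ht hmem
      rwa [hf₂, Set.indicator_of_mem hmem] at ht
    · filter_upwards [heq', hshift, hrefl, ae_ne_const (1 - b), ae_ne_const (b - 1/2)]
        with t ht hsh hrf hne1 hne2 hmem
      have htb : t ∈ Set.Ioo (0:ℝ) b := ⟨hmem.1, by linarith [hmem.2]⟩
      have h0 := ht htb
      have hQt : (if t ≤ 1 - b then Q t + 2 * A₃ * Q (t + 1/2)
          else if t ≤ b - 1/2 then Q t + 2 * A₃ * Q (t + 1/2) + 2 * A₄ * Q (1 - t)
          else if t ≤ 1/2 then Q t + 2 * A₄ * Q (1 - t)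
          else 2 * A₂ * Q t) = Q t := by
        by_cases h1 : t ≤ 1 - b
        · have h1' : t < 1 - b := lt_of_le_of_ne h1 hne1
          have ht1 : t + 1/2 ∈ Set.Ioo (1/2:ℝ) b := ⟨by linarith [hmem.1], by linarith⟩
          rw [if_pos h1, hsh ht1]; ring
        · push_neg at h1
          by_cases h2 : t ≤ b - 1/2
          · have h2' : t < b - 1/2 := lt_of_le_of_ne h2 hne2
            have ht1 : t + 1/2 ∈ Set.Ioo (1/2:ℝ) b := ⟨by linarith [hmem.1], by linarith⟩
            have ht2 : 1 - t ∈ Set.Ioo (1/2:ℝ) b := ⟨by linarith [hmem.2], by linarith⟩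
            rw [if_neg (not_le.2 h1), if_pos h2, hsh ht1, hrf ht2]; ring
          · have ht2 : 1 - t ∈ Set.Ioo (1/2:ℝ) b := ⟨by linarith [hmem.2], by linarith⟩
            rw [if_neg (not_le.2 h1), if_neg h2, if_pos hmem.2.le, hrf ht2]; ring
      rw [hQt] at h0
      have hIeq : (∫ x in Set.Ioo t b, |Q x|) = ∫ x in Set.Ioo t b, |f₂ x| := by
        apply setIntegral_congr_ae measurableSet_Ioo
        filter_upwards [hQ1', ae_ne_const (1/2 : ℝ)] with x hx hxne hxmem
        rcases lt_or_gt_of_ne hxne with h | h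
        · have hxm : x ∈ Set.Ioo (0:ℝ) (1/2) := ⟨lt_trans hmem.1 hxmem.1, h⟩
          have h2 : f₂ x = Q x := by rw [hf₂, Set.indicator_of_mem hxm]
          show |Q x| = |f₂ x|
          rw [h2]
        · have hnm : x ∉ Set.Ioo (0:ℝ) (1/2) := fun hc => absurd hc.2 (not_lt.2 h.le)
          have h2 : f₂ x = 0 := by rw [hf₂, Set.indicator_of_notMem hnm]
          show |Q x| = |f₂ x|
          rw [h2, hx ⟨h, hxmem.2⟩]
      have hQteq : Q t = -(∫ x in Set.Ioo t b, K x t * Q x) := by linarith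
      rw [hf₂, Set.indicator_of_mem hmem, hQteq, abs_neg, ← hIeq]
      exact hbound t htb
  -- combine
  rw [ae_restrict_iff' measurableSet_Ioo]
  filter_upwards [hQ1', hQ2', ae_ne_const (1/2 : ℝ)] with t h1 h2 h3 hmem
  rcases lt_or_gt_of_ne h3 with h | h
  · exact h2 ⟨hmem.1, h⟩
  · exact h1 ⟨h, hmem.2⟩
end

section
/- Let b ∈ (1/2, 3/4), let Q ∈ L²(0,b) be real-valued, let K : ℝ × ℝ → ℝ be measurable and bounded, and let A₂, A₃, A₄ ∈ ℝ with A₂ ≠ 0. Define F on [0,b] piecewise by: F(t) = Q(t) + 2A₃·Q(t + 1/2) for t ∈ [0, b − 1/2]; F(t) = Q(t) for t ∈ (b − 1/2, 1 − b]; F(t) = Q(t) + 2A₄·Q(1 − t) for t ∈ (1 − b, 1/2]; F(t) = 2A₂·Q(t) for t ∈ (1/2, b]. If F(t) + ∫_t^b K(x,t)·Q(x) dx = 0 for almost every t ∈ (0,b), then Q = 0 almost everywhere on (0,b). -/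
open MeasureTheory

lemma gronwall_zero (a b C L : ℝ) (hC : 0 ≤ C) (u : ℝ → ℝ)
    (hu0 : ∀ t, 0 ≤ u t) (huL : ∀ t, u t ≤ L)
    (huint : ∀ t, IntegrableOn u (Set.Ioo t b))
    (h : ∀ t, a ≤ t → u t ≤ C * ∫ s in Set.Ioo t b, u s) :
    ∀ t, a ≤ t → u t = 0 := by
  -- first: t ≥ b case we can't get directly; prove bound by induction on Icc a b
  have hL0 : ∀ t, a ≤ t → t ≤ b → 0 ≤ L := fun t _ _ => (hu0 t).trans (huL t)
  have key : ∀ n : ℕ, ∀ t, a ≤ t → t ≤ b → u t ≤ L * (C * (b - t)) ^ n / n.factorial := by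
    intro n
    induction n with
    | zero => intro t ha hb; simpa using huL t
    | succ n ih =>
      intro t ha htb
      have hint2 : IntegrableOn (fun s => L * (C * (b - s)) ^ n / n.factorial)
          (Set.Ioo t b) := by
        apply (Continuous.integrableOn_Icc (by fun_prop)).mono_set Set.Ioo_subset_Icc_self
      have hmono : ∫ s in Set.Ioo t b, u s
          ≤ ∫ s in Set.Ioo t b, L * (C * (b - s)) ^ n / n.factorial := by
        apply setIntegral_mono_on (huint t) hint2 measurableSet_Ioo
        intro s hs
        exact ih s (ha.trans hs.1.le) hs.2.le
      have hcalc : ∫ s in Set.Ioo t b, L * (C * (b - s)) ^ n / n.factorial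
          = L * C ^ n / n.factorial * ((b - t) ^ (n+1) / (n+1)) := by
        have : ∀ s : ℝ, L * (C * (b - s)) ^ n / n.factorial
            = (L * C ^ n / n.factorial) * (b - s) ^ n := by
          intro s; rw [mul_pow]; ring
        simp_rw [this]
        rw [MeasureTheory.integral_const_mul]
        have h1 : ∫ s in Set.Ioo t b, (b - s) ^ n
            = ∫ s in t..b, (b - s) ^ n := by
          rw [intervalIntegral.integral_of_le htb, ← MeasureTheory.integral_Ioc_eq_integral_Ioo]
        rw [h1, intervalIntegral.integral_comp_sub_left (fun x => x ^ n) b]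
        simp [integral_pow]
      have hstep : C * ∫ s in Set.Ioo t b, u s
          ≤ C * (L * C ^ n / n.factorial * ((b - t) ^ (n+1) / (n+1))) := by
        rw [← hcalc]
        exact mul_le_mul_of_nonneg_left hmono hC
      calc u t ≤ C * (L * C ^ n / n.factorial * ((b - t) ^ (n+1) / (n+1))) :=
            (h t ha).trans hstep
        _ = L * (C * (b - t)) ^ (n+1) / (n+1).factorial := by
            rw [Nat.factorial_succ, mul_pow]
            have hn : ((n:ℝ) + 1) ≠ 0 := by positivity
            have hf : ((n.factorial : ℝ)) ≠ 0 := Nat.cast_ne_zero.2 n.factorial_ne_zero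
            push_cast
            field_simp
            ring
  intro t hat
  rcases le_or_gt t b with htb | htb
  · have hlim : Filter.Tendsto (fun n : ℕ => L * (C * (b - t)) ^ n / n.factorial)
        Filter.atTop (nhds 0) := by
      have := FloorSemiring.tendsto_pow_div_factorial_atTop (K := ℝ) (C * (b - t))
      have h2 := this.const_mul L
      simpa [mul_div_assoc] using h2
    have hle : u t ≤ 0 := ge_of_tendsto' hlim (fun n => key n t hat htb)
    exact le_antisymm hle (hu0 t)
  · have : Set.Ioo t b = ∅ := Set.Ioo_eq_empty (by linarith)
    have h2 := h t hat
    rw [this] at h2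
    simp at h2
    exact le_antisymm h2 (hu0 t)

/-- The piecewise-reflection step of the proof of Lemma 3.1, case `b ∈ (1/2, 3/4)`:
if `F(t) + ∫_t^b K(x,t) Q(x) dx = 0` a.e. with the indicated piecewise `F`, then
`Q = 0` a.e. on `(0,b)`. -/
theorem piecewise_volterra_case_b_lt
    (b : ℝ) (hb : b ∈ Set.Ioo (1/2 : ℝ) (3/4))
    (Q : ℝ → ℝ) (hQ : MemLp Q 2 (volume.restrict (Set.Ioo 0 b)))
    (K : ℝ → ℝ → ℝ) (hKmeas : Measurable (Function.uncurry K))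
    (M : ℝ) (hKbd : ∀ x t : ℝ, |K x t| ≤ M)
    (A₂ A₃ A₄ : ℝ) (hA₂ : A₂ ≠ 0)
    (heq : ∀ᵐ t ∂(volume.restrict (Set.Ioo 0 b)),
      (if t ≤ b - 1/2 then Q t + 2 * A₃ * Q (t + 1/2)
       else if t ≤ 1 - b then Q t
       else if t ≤ 1/2 then Q t + 2 * A₄ * Q (1 - t)
       else 2 * A₂ * Q t) + ∫ x in Set.Ioo t b, K x t * Q x = 0) :
    ∀ᵐ t ∂(volume.restrict (Set.Ioo 0 b)), Q t = 0 := by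
  obtain ⟨hb1, hb2⟩ := hb
  have hb0 : (0:ℝ) < b := by linarith
  haveI : IsFiniteMeasure (volume.restrict (Set.Ioo 0 b)) :=
    ⟨by rw [Measure.restrict_apply_univ]; exact measure_Ioo_lt_top⟩
  have hQint : IntegrableOn Q (Set.Ioo 0 b) := hQ.integrable one_le_two
  set g : ℝ → ℝ := (Set.Ioo 0 b).indicator (fun x => |Q x|) with hg_def
  have hg_nonneg : ∀ x, 0 ≤ g x := fun x => Set.indicator_nonneg (fun y _ => abs_nonneg _) x
  have hg_int : Integrable g := by
    have h1 : IntegrableOn (fun x => |Q x|) (Set.Ioo 0 b) := by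
      simpa [Real.norm_eq_abs, IntegrableOn] using hQint.norm
    exact h1.integrable_indicator measurableSet_Ioo
  set L := ∫ x, g x with hL_def
  set u : ℝ → ℝ := fun t => ∫ s in Set.Ioo t b, g s with hu_def
  have hu0 : ∀ t, 0 ≤ u t := fun t =>
    setIntegral_nonneg measurableSet_Ioo (fun x _ => hg_nonneg x)
  have huL : ∀ t, u t ≤ L := fun t =>
    setIntegral_le_integral hg_int (Filter.Eventually.of_forall hg_nonneg)
  have huanti : Antitone u := by
    intro t₁ t₂ h12
    exact setIntegral_mono_set hg_int.integrableOn
      (Filter.Eventually.of_forall hg_nonneg)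
      ((Set.Ioo_subset_Ioo h12 le_rfl).eventuallyLE)
  have humeas : Measurable u := huanti.measurable
  have huint : ∀ t, IntegrableOn u (Set.Ioo t b) := by
    intro t
    apply Integrable.mono' (g := fun _ => L)
      (integrableOn_const measure_Ioo_lt_top.ne)
      humeas.aestronglyMeasurable.restrict
    refine Filter.Eventually.of_forall fun s => ?_
    rw [Real.norm_eq_abs, abs_of_nonneg (hu0 s)]; exact huL s
  have hM0 : 0 ≤ M := (abs_nonneg _).trans (hKbd 0 0)
  have hA₂' : 0 < |A₂| := abs_pos.2 hA₂
  -- bound on the integral term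
  have hI : ∀ t ∈ Set.Ioo (0:ℝ) b, |∫ x in Set.Ioo t b, K x t * Q x| ≤ M * u t := by
    intro t ht
    have hsub : Set.Ioo t b ⊆ Set.Ioo 0 b := Set.Ioo_subset_Ioo ht.1.le le_rfl
    have hQt : IntegrableOn Q (Set.Ioo t b) := hQint.mono_set hsub
    have hKt : Measurable fun x => K x t :=
      hKmeas.comp (measurable_id.prodMk measurable_const)
    have hbd : ∀ x, ‖K x t * Q x‖ ≤ M * |Q x| := by
      intro x
      rw [Real.norm_eq_abs, abs_mul]
      exact mul_le_mul_of_nonneg_right (hKbd x t) (abs_nonneg _)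
    have hQtabs : IntegrableOn (fun x => |Q x|) (Set.Ioo t b) := by
      simpa [Real.norm_eq_abs, IntegrableOn] using hQt.norm
    have hint : IntegrableOn (fun x => K x t * Q x) (Set.Ioo t b) := by
      apply Integrable.mono' (hQtabs.const_mul M)
        (hKt.aestronglyMeasurable.restrict.mul hQt.aestronglyMeasurable)
      exact Filter.Eventually.of_forall hbd
    have h1 : |∫ x in Set.Ioo t b, K x t * Q x| ≤ ∫ x in Set.Ioo t b, M * |Q x| := by
      calc |∫ x in Set.Ioo t b, K x t * Q x| ≤ ∫ x in Set.Ioo t b, ‖K x t * Q x‖ := by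
            rw [← Real.norm_eq_abs]
            exact norm_integral_le_integral_norm _
        _ ≤ ∫ x in Set.Ioo t b, M * |Q x| :=
            integral_mono_ae hint.norm (hQtabs.const_mul M)
              (Filter.Eventually.of_forall hbd)
    have h2 : ∫ x in Set.Ioo t b, M * |Q x| = M * u t := by
      rw [MeasureTheory.integral_const_mul]
      congr 1
      apply setIntegral_congr_fun measurableSet_Ioo
      intro x hx
      rw [hg_def, Set.indicator_of_mem (hsub hx)]
    rw [h2] at h1
    exact h1
  have heq' : ∀ᵐ t ∂(volume : Measure ℝ), t ∈ Set.Ioo 0 b →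
      (if t ≤ b - 1/2 then Q t + 2 * A₃ * Q (t + 1/2)
       else if t ≤ 1 - b then Q t
       else if t ≤ 1/2 then Q t + 2 * A₄ * Q (1 - t)
       else 2 * A₂ * Q t) + ∫ x in Set.Ioo t b, K x t * Q x = 0 :=
    (ae_restrict_iff' measurableSet_Ioo).1 heq
  have hC₁ : (0:ℝ) ≤ M / (2 * |A₂|) := by positivity
  -- step 1 : bound on (1/2, b)
  have hbound1 : ∀ᵐ t ∂(volume : Measure ℝ), t ∈ Set.Ioo 0 b → 1/2 < t →
      |Q t| ≤ (M / (2 * |A₂|)) * u t := by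
    filter_upwards [heq'] with t ht hmem h12
    have ht2 := ht hmem
    rw [if_neg (by linarith), if_neg (by linarith), if_neg (by linarith)] at ht2
    have hIt := hI t hmem
    have habs : |2 * A₂ * Q t| ≤ M * u t := by
      have heq3 : 2 * A₂ * Q t = -(∫ x in Set.Ioo t b, K x t * Q x) := by linarith
      rw [heq3, abs_neg]; exact hIt
    have habs2 : 2 * |A₂| * |Q t| ≤ M * u t := by
      calc 2 * |A₂| * |Q t| = |2 * A₂ * Q t| := by
            rw [abs_mul, abs_mul, abs_two]
        _ ≤ M * u t := habs
    rw [div_mul_eq_mul_div, le_div_iff₀ (by positivity)]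
    linarith
  -- pointwise Gronwall inequality on [1/2, b]
  have h1 : ∀ t, (1:ℝ)/2 ≤ t → u t ≤ (M / (2*|A₂|)) * ∫ s in Set.Ioo t b, u s := by
    intro t ht
    have hb' : ∀ᵐ s ∂(volume.restrict (Set.Ioo t b)), g s ≤ (M/(2*|A₂|)) * u s := by
      filter_upwards [ae_restrict_mem measurableSet_Ioo, ae_restrict_of_ae hbound1]
        with s hs hbs
      have hs0 : s ∈ Set.Ioo (0:ℝ) b := ⟨by linarith [hs.1], hs.2⟩
      have h12 : (1:ℝ)/2 < s := lt_of_le_of_lt ht hs.1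
      rw [hg_def, Set.indicator_of_mem hs0]
      exact hbs hs0 h12
    calc u t ≤ ∫ s in Set.Ioo t b, (M/(2*|A₂|)) * u s :=
          integral_mono_ae hg_int.integrableOn ((huint t).const_mul _) hb'
      _ = (M/(2*|A₂|)) * ∫ s in Set.Ioo t b, u s := MeasureTheory.integral_const_mul _ _
  have hu_half : u (1/2) = 0 :=
    gronwall_zero (1/2) b _ L hC₁ u hu0 huL huint h1 (1/2) le_rfl
  -- Q vanishes a.e. on (1/2, b)
  have hg_half : ∀ᵐ s ∂(volume : Measure ℝ), s ∈ Set.Ioo (1/2 : ℝ) b → Q s = 0 := by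
    have hzero : ∫ s in Set.Ioo ((1:ℝ)/2) b, g s = 0 := hu_half
    have hae : (fun s => g s) =ᵐ[volume.restrict (Set.Ioo ((1:ℝ)/2) b)] 0 :=
      (integral_eq_zero_iff_of_nonneg_ae
        (Filter.Eventually.of_forall hg_nonneg) hg_int.integrableOn).1 hzero
    rw [Filter.EventuallyEq, ae_restrict_iff' measurableSet_Ioo] at hae
    filter_upwards [hae] with s hsim hs
    have hgs := hsim hs
    have hs0 : s ∈ Set.Ioo (0:ℝ) b := ⟨by linarith [hs.1], hs.2⟩
    rw [hg_def, Set.indicator_of_mem hs0] at hgs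
    exact abs_eq_zero.1 hgs
  have hshift : ∀ᵐ t ∂(volume : Measure ℝ),
      (t + 1/2) ∈ Set.Ioo (1/2:ℝ) b → Q (t + 1/2) = 0 :=
    (measurePreserving_add_right volume (1/2 : ℝ)).quasiMeasurePreserving.ae hg_half
  have hrefl : ∀ᵐ t ∂(volume : Measure ℝ),
      (1 - t) ∈ Set.Ioo (1/2:ℝ) b → Q (1 - t) = 0 :=
    (Measure.measurePreserving_sub_left volume (1 : ℝ)).quasiMeasurePreserving.ae hg_half
  have hne1 : ∀ᵐ t ∂(volume : Measure ℝ), t ≠ b - 1/2 := by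
    rw [ae_iff]; simp only [not_not, Set.setOf_eq_eq_singleton]; exact measure_singleton (b - 1/2)
  have hne2 : ∀ᵐ t ∂(volume : Measure ℝ), t ≠ (1:ℝ)/2 := by
    rw [ae_iff]; simp only [not_not, Set.setOf_eq_eq_singleton]; exact measure_singleton ((1:ℝ)/2)
  set C : ℝ := M + M / (2 * |A₂|) with hC_def
  have hC0 : (0:ℝ) ≤ C := by positivity
  -- step 2 a.e. bound on all of (0,b)
  have hbound2 : ∀ᵐ t ∂(volume : Measure ℝ), t ∈ Set.Ioo 0 b → |Q t| ≤ C * u t := by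
    filter_upwards [heq', hshift, hrefl, hne1, hne2, hbound1]
      with t hteq hts htr hn1 hn2 hb1t ht
    have hIt := hI t ht
    rcases le_or_gt t (1/2 : ℝ) with h12 | h12
    · have hKey : |Q t| ≤ M * u t := by
        rcases le_or_gt t (b - 1/2) with hc1 | hc1
        · have hc1' : t < b - 1/2 := lt_of_le_of_ne hc1 hn1
          have hmem : (t + 1/2) ∈ Set.Ioo (1/2:ℝ) b := ⟨by linarith [ht.1], by linarith⟩
          have hQ2 := hts hmem
          have heq3 := hteq ht
          rw [if_pos hc1, hQ2] at heq3
          have heq4 : Q t = -(∫ x in Set.Ioo t b, K x t * Q x) := by linarith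
          rw [heq4, abs_neg]; exact hIt
        · rcases le_or_gt t (1 - b) with hc2 | hc2
          · have heq3 := hteq ht
            rw [if_neg (by linarith), if_pos hc2] at heq3
            have heq4 : Q t = -(∫ x in Set.Ioo t b, K x t * Q x) := by linarith
            rw [heq4, abs_neg]; exact hIt
          · have h12' : t < 1/2 := lt_of_le_of_ne h12 hn2
            have hmem : (1 - t) ∈ Set.Ioo (1/2:ℝ) b := ⟨by linarith, by linarith⟩
            have hQ2 := htr hmem
            have heq3 := hteq ht
            rw [if_neg (by linarith), if_neg (by linarith), if_pos h12, hQ2] at heq3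
            have heq4 : Q t = -(∫ x in Set.Ioo t b, K x t * Q x) := by linarith
            rw [heq4, abs_neg]; exact hIt
      have hmul : M * u t ≤ C * u t :=
        mul_le_mul_of_nonneg_right (by rw [hC_def]; linarith) (hu0 t)
      exact hKey.trans hmul
    · have hq := hb1t ht h12
      have hmul : (M/(2*|A₂|)) * u t ≤ C * u t :=
        mul_le_mul_of_nonneg_right (by rw [hC_def]; linarith) (hu0 t)
      exact hq.trans hmul
  -- pointwise Gronwall inequality on [0, b]
  have h2 : ∀ t, (0:ℝ) ≤ t → u t ≤ C * ∫ s in Set.Ioo t b, u s := by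
    intro t ht
    have hb' : ∀ᵐ s ∂(volume.restrict (Set.Ioo t b)), g s ≤ C * u s := by
      filter_upwards [ae_restrict_mem measurableSet_Ioo, ae_restrict_of_ae hbound2]
        with s hs hbs
      have hs0 : s ∈ Set.Ioo (0:ℝ) b := ⟨by linarith [hs.1], hs.2⟩
      rw [hg_def, Set.indicator_of_mem hs0]
      exact hbs hs0
    calc u t ≤ ∫ s in Set.Ioo t b, C * u s :=
          integral_mono_ae hg_int.integrableOn ((huint t).const_mul _) hb'
      _ = C * ∫ s in Set.Ioo t b, u s := MeasureTheory.integral_const_mul _ _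
  have hu_zero : u 0 = 0 :=
    gronwall_zero 0 b C L hC0 u hu0 huL huint h2 0 le_rfl
  -- conclude
  have hae : (fun s => g s) =ᵐ[volume.restrict (Set.Ioo (0:ℝ) b)] 0 :=
    (integral_eq_zero_iff_of_nonneg_ae
      (Filter.Eventually.of_forall hg_nonneg) hg_int.integrableOn).1 hu_zero
  filter_upwards [hae, ae_restrict_mem measurableSet_Ioo] with t hgt hmem
  rw [hg_def] at hgt
  have : |Q t| = 0 := by
    have := hgt
    rwa [Set.indicator_of_mem hmem] at this
  exact abs_eq_zero.1 this
end

section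
/- For every σ > 0 there exists M > 0 such that for every real t with |t| ≥ 1, writing z = (it)^{1/2} for the principal square root of it, one has |sin(σ·z)| ≥ M·exp(σ·|Im z|) and |cos(σ·z)| ≥ M·exp(σ·|Im z|). -/
open Complex

lemma aux_norm_exp_mul_I (w : ℂ) : ‖Complex.exp (w * I)‖ = Real.exp (-w.im) := by
  rw [Complex.norm_exp, Complex.mul_I_re]

lemma aux_sin_lb (w : ℂ) :
    Real.exp |w.im| - Real.exp (-|w.im|) ≤ 2 * ‖Complex.sin w‖ := by
  have hs : Complex.sin w = (Complex.exp (-w * I) - Complex.exp (w * I)) * I / 2 :=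
    rfl
  have h1 : ‖Complex.exp (-w * I)‖ = Real.exp w.im := by
    rw [aux_norm_exp_mul_I]; simp
  have h2 : ‖Complex.exp (w * I)‖ = Real.exp (-w.im) := aux_norm_exp_mul_I w
  have key : |Real.exp w.im - Real.exp (-w.im)| ≤ 2 * ‖Complex.sin w‖ := by
    have := abs_norm_sub_norm_le (Complex.exp (-w * I)) (Complex.exp (w * I))
    rw [h1, h2] at this
    have hnorm : ‖Complex.sin w‖ = ‖Complex.exp (-w * I) - Complex.exp (w * I)‖ / 2 := by
      rw [hs]; simp [norm_mul]
    rw [hnorm]; linarith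
  rcases abs_cases w.im with ⟨he, _⟩ | ⟨he, hneg⟩
  · rw [he]
    calc Real.exp w.im - Real.exp (-w.im) ≤ |Real.exp w.im - Real.exp (-w.im)| := le_abs_self _
      _ ≤ _ := key
  · rw [he]
    have : Real.exp (-w.im) - Real.exp (- -w.im) ≤ |Real.exp w.im - Real.exp (-w.im)| := by
      rw [neg_neg, abs_sub_comm]; exact le_abs_self _
    linarith [key]

lemma aux_cos_lb (w : ℂ) :
    Real.exp |w.im| - Real.exp (-|w.im|) ≤ 2 * ‖Complex.cos w‖ := by
  have hs : Complex.cos w = (Complex.exp (w * I) + Complex.exp (-w * I)) / 2 :=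
    rfl
  have h1 : ‖Complex.exp (-w * I)‖ = Real.exp w.im := by
    rw [aux_norm_exp_mul_I]; simp
  have h2 : ‖Complex.exp (w * I)‖ = Real.exp (-w.im) := aux_norm_exp_mul_I w
  have key : |Real.exp w.im - Real.exp (-w.im)| ≤ 2 * ‖Complex.cos w‖ := by
    have := abs_norm_sub_norm_le (Complex.exp (-w * I)) (-Complex.exp (w * I))
    rw [h1, norm_neg, h2, sub_neg_eq_add] at this
    have hnorm : ‖Complex.cos w‖ = ‖Complex.exp (-w * I) + Complex.exp (w * I)‖ / 2 := by
      rw [hs]; rw [add_comm]; simp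
    rw [hnorm]; linarith
  rcases abs_cases w.im with ⟨he, _⟩ | ⟨he, hneg⟩
  · rw [he]
    calc Real.exp w.im - Real.exp (-w.im) ≤ |Real.exp w.im - Real.exp (-w.im)| := le_abs_self _
      _ ≤ _ := key
  · rw [he]
    have : Real.exp (-w.im) - Real.exp (- -w.im) ≤ |Real.exp w.im - Real.exp (-w.im)| := by
      rw [neg_neg, abs_sub_comm]; exact le_abs_self _
    linarith [key]

/-- Lower bounds for `|sin(σz)|` and `|cos(σz)|` with `z = √(it)`, `|t| ≥ 1`, used for
estimating canonical products on the imaginary axis. -/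
theorem sin_cos_lower_bound_on_sqrt_imaginary_axis :
    ∀ σ : ℝ, 0 < σ → ∃ M : ℝ, 0 < M ∧ ∀ t : ℝ, 1 ≤ |t| →
      M * Real.exp (σ * |((I * (t : ℂ)) ^ (1/2 : ℂ)).im|) ≤
          ‖Complex.sin ((σ : ℂ) * (I * (t : ℂ)) ^ (1/2 : ℂ))‖ ∧
        M * Real.exp (σ * |((I * (t : ℂ)) ^ (1/2 : ℂ)).im|) ≤
          ‖Complex.cos ((σ : ℂ) * (I * (t : ℂ)) ^ (1/2 : ℂ))‖ := by
  intro σ hσ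
  set y₀ : ℝ := σ * Real.sqrt (1/2) with hy₀
  have hy₀pos : 0 < y₀ := mul_pos hσ (Real.sqrt_pos.mpr (by norm_num))
  refine ⟨(1 - Real.exp (-2 * y₀)) / 2, by
    have := Real.exp_lt_one_iff.mpr (by linarith : -2 * y₀ < 0); linarith, ?_⟩
  intro t ht
  set z : ℂ := (I * (t : ℂ)) ^ (1/2 : ℂ) with hz
  -- z^2 = I * t
  have hz2 : z ^ 2 = I * (t : ℂ) := by
    rw [hz]
    have : (1/2 : ℂ) = ((2 : ℕ) : ℂ)⁻¹ := by norm_num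
    rw [this]
    exact Complex.cpow_nat_inv_pow _ (by norm_num)
  -- real part relation
  have hre : z.re ^ 2 = z.im ^ 2 := by
    have h := congrArg Complex.re hz2
    simp [pow_two, Complex.mul_re, Complex.mul_im] at h
    nlinarith [h]
  -- norm relation : normSq z squared = t^2
  have hns : (z.re ^ 2 + z.im ^ 2) ^ 2 = t ^ 2 := by
    have h := congrArg Complex.normSq hz2
    rw [map_pow] at h
    simp [Complex.normSq_apply, Complex.normSq_mul] at h
    nlinarith [h]
  have him2 : 1/2 ≤ z.im ^ 2 := by
    have habs : |t| ^ 2 = t ^ 2 := sq_abs t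
    nlinarith [sq_nonneg (z.re^2 + z.im^2 - |t|), sq_nonneg z.re, sq_nonneg z.im]
  have him : Real.sqrt (1/2) ≤ |z.im| := by
    have := Real.sqrt_le_sqrt him2
    rwa [Real.sqrt_sq_eq_abs] at this
  -- the imaginary part of σ z
  set w : ℂ := (σ : ℂ) * z with hw
  have hwim : w.im = σ * z.im := by
    rw [hw]; simp [Complex.mul_im]
  have hwabs : |w.im| = σ * |z.im| := by
    rw [hwim, abs_mul, abs_of_pos hσ]
  have hy : y₀ ≤ |w.im| := by
    rw [hwabs, hy₀]
    exact mul_le_mul_of_nonneg_left him hσ.le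
  -- main estimate
  have hmain : (1 - Real.exp (-2 * y₀)) / 2 * Real.exp (σ * |z.im|)
      ≤ (Real.exp |w.im| - Real.exp (-|w.im|)) / 2 := by
    rw [← hwabs]
    have h1 : Real.exp (-|w.im|) = Real.exp |w.im| * Real.exp (-2 * |w.im|) := by
      rw [← Real.exp_add]; ring_nf
    have h2 : Real.exp (-2 * |w.im|) ≤ Real.exp (-2 * y₀) :=
      Real.exp_le_exp.mpr (by linarith)
    have h3 : (0:ℝ) < Real.exp |w.im| := Real.exp_pos _
    rw [h1]
    nlinarith [h3, h2]
  constructor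
  · have := aux_sin_lb w
    calc (1 - Real.exp (-2 * y₀)) / 2 * Real.exp (σ * |z.im|)
        ≤ (Real.exp |w.im| - Real.exp (-|w.im|)) / 2 := hmain
      _ ≤ ‖Complex.sin w‖ := by linarith
  · have := aux_cos_lb w
    calc (1 - Real.exp (-2 * y₀)) / 2 * Real.exp (σ * |z.im|)
        ≤ (Real.exp |w.im| - Real.exp (-|w.im|)) / 2 := hmain
      _ ≤ ‖Complex.cos w‖ := by linarith
end

section
/- Let σ₁, σ₂ > 0 and a ∈ ℝ, and define Φ₀(λ) = σ₁⁻¹·√λ·sin(σ₁·√λ)·(cos(σ₂·√λ) + a) for λ ∈ ℂ, where √λ is the principal square root. Then there exist constants C₁ > 0 and T ≥ 1 such that for every real t with |t| ≥ T, |Φ₀(it)| ≥ C₁·√|t|·exp((σ₁ + σ₂)·|Im √(it)|). -/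
open Complex

private lemma exp_sub_exp_abs (y : ℝ) :
    Real.exp |y| - Real.exp (-|y|) = |Real.exp y - Real.exp (-y)| := by
  rcases le_total 0 y with h | h
  · rw [_root_.abs_of_nonneg h, _root_.abs_of_nonneg]
    have := Real.exp_le_exp.2 (neg_le_self h)
    linarith
  · rw [_root_.abs_of_nonpos h, _root_.abs_of_nonpos, neg_neg]
    · ring_nf
    · have := Real.exp_le_exp.2 (le_neg_self_iff.2 h)
      linarith

private lemma sin_lower (w : ℂ) :
    (Real.exp |w.im| - Real.exp (-|w.im|)) / 2 ≤ ‖Complex.sin w‖ := by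
  have h1 : ‖Complex.sin w‖ = ‖Complex.exp (-w * I) - Complex.exp (w * I)‖ / 2 := by
    rw [Complex.sin, norm_div, norm_mul]
    simp
  have h2 := abs_norm_sub_norm_le (Complex.exp (-w * I)) (Complex.exp (w * I))
  have e1 : ‖Complex.exp (-w * I)‖ = Real.exp w.im := by
    rw [Complex.norm_exp]; simp
  have e2 : ‖Complex.exp (w * I)‖ = Real.exp (-w.im) := by
    rw [Complex.norm_exp]; simp
  rw [e1, e2] at h2
  rw [h1, exp_sub_exp_abs]
  linarith

private lemma cos_lower (w : ℂ) :
    (Real.exp |w.im| - Real.exp (-|w.im|)) / 2 ≤ ‖Complex.cos w‖ := by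
  have h1 : ‖Complex.cos w‖ = ‖Complex.exp (-w * I) + Complex.exp (w * I)‖ / 2 := by
    rw [Complex.cos, norm_div]
    norm_num [add_comm]
  have h2 : |‖Complex.exp (-w * I)‖ - ‖Complex.exp (w * I)‖| ≤
      ‖Complex.exp (-w * I) + Complex.exp (w * I)‖ := by
    have := abs_norm_sub_norm_le (Complex.exp (-w * I)) (-Complex.exp (w * I))
    simpa [sub_neg_eq_add] using this
  have e1 : ‖Complex.exp (-w * I)‖ = Real.exp w.im := by
    rw [Complex.norm_exp]; simp
  have e2 : ‖Complex.exp (w * I)‖ = Real.exp (-w.im) := by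
    rw [Complex.norm_exp]; simp
  rw [e1, e2] at h2
  rw [h1, exp_sub_exp_abs]
  linarith

/-- Lower bound `|Φ₀(it)| ≥ C₁ √|t| e^{(σ₁+σ₂)|Im √(it)|}` for the model function
`Φ₀(λ) = σ₁⁻¹ √λ sin(σ₁√λ)(cos(σ₂√λ) + a)` on the imaginary axis. -/
theorem model_function_lower_bound
    (σ₁ σ₂ : ℝ) (hσ₁ : 0 < σ₁) (hσ₂ : 0 < σ₂) (a : ℝ) :
    ∃ C₁ : ℝ, 0 < C₁ ∧ ∃ T : ℝ, 1 ≤ T ∧ ∀ t : ℝ, T ≤ |t| →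
      C₁ * Real.sqrt |t| * Real.exp ((σ₁ + σ₂) * |((I * (t : ℂ)) ^ (1/2 : ℂ)).im|) ≤
        ‖(σ₁ : ℂ)⁻¹ * (I * (t : ℂ)) ^ (1/2 : ℂ) *
            Complex.sin ((σ₁ : ℂ) * (I * (t : ℂ)) ^ (1/2 : ℂ)) *
            (Complex.cos ((σ₂ : ℂ) * (I * (t : ℂ)) ^ (1/2 : ℂ)) + (a : ℂ))‖ := by
  set Y : ℝ := max (1 / σ₁) (3 * (|a| + 1) / σ₂) with hY
  have hY1 : 1 / σ₁ ≤ Y := le_max_left _ _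
  have hY2 : 3 * (|a| + 1) / σ₂ ≤ Y := le_max_right _ _
  have hYpos : 0 < Y := lt_of_lt_of_le (by positivity) hY1
  refine ⟨σ₁⁻¹ / 32, by positivity, max 1 (2 * Y ^ 2), le_max_left _ _, ?_⟩
  intro t ht
  have ht1 : (1 : ℝ) ≤ |t| := le_trans (le_max_left _ _) ht
  have ht0 : t ≠ 0 := by intro h; simp [h] at ht1; linarith
  have hItne : I * (t : ℂ) ≠ 0 := by
    simp [Complex.ext_iff, ht0]
  set z : ℂ := (I * (t : ℂ)) ^ (1 / 2 : ℂ) with hz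
  set y : ℝ := Real.sqrt (|t| / 2) with hy
  -- imaginary part of z
  have habsIt : ‖I * (t : ℂ)‖ = |t| := by
    rw [norm_mul, Complex.norm_I, Complex.norm_real, Real.norm_eq_abs, one_mul]
  have hreIt : (I * (t : ℂ)).re = 0 := by simp
  have him : |z.im| = y := by
    rw [hz, show (1 / 2 : ℂ) = (2⁻¹ : ℂ) by norm_num, Complex.abs_cpow_inv_two_im,
      habsIt, hreIt, sub_zero]
  -- absolute value of z
  have habsz : ‖z‖ = Real.sqrt |t| := by
    rw [hz, show (1 / 2 : ℂ) = ((1 / 2 : ℝ) : ℂ) by norm_num,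
      Complex.norm_cpow_real, habsIt, Real.sqrt_eq_rpow]
  -- y ≥ Y
  have hyY : Y ≤ y := by
    have h2Y : 2 * Y ^ 2 ≤ |t| := le_trans (le_max_right _ _) ht
    have : Y ^ 2 ≤ |t| / 2 := by linarith
    calc Y = Real.sqrt (Y ^ 2) := by rw [Real.sqrt_sq hYpos.le]
      _ ≤ y := Real.sqrt_le_sqrt this
  have hypos : 0 < y := lt_of_lt_of_le hYpos hyY
  have hσ₁y : 1 ≤ σ₁ * y := by
    rw [div_le_iff₀ hσ₁] at hY1
    nlinarith
  have hσ₂y : 3 * (|a| + 1) ≤ σ₂ * y := by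
    rw [div_le_iff₀ hσ₂] at hY2
    nlinarith
  -- bound on sin factor
  have him1 : |((σ₁ : ℂ) * z).im| = σ₁ * y := by
    rw [Complex.im_ofReal_mul, abs_mul, abs_of_pos hσ₁, him]
  have him2 : |((σ₂ : ℂ) * z).im| = σ₂ * y := by
    rw [Complex.im_ofReal_mul, abs_mul, abs_of_pos hσ₂, him]
  have hexp1 : (2 : ℝ) ≤ Real.exp (σ₁ * y) := by
    have := Real.add_one_le_exp (σ₁ * y)
    linarith
  have hexpneg1 : Real.exp (-(σ₁ * y)) ≤ 1 := by
    rw [Real.exp_le_one_iff]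
    nlinarith
  have hsin : Real.exp (σ₁ * y) / 4 ≤ ‖Complex.sin ((σ₁ : ℂ) * z)‖ := by
    have := sin_lower ((σ₁ : ℂ) * z)
    rw [him1] at this
    linarith
  -- bound on cos factor
  have hexp2 : σ₂ * y + 1 ≤ Real.exp (σ₂ * y) := Real.add_one_le_exp (σ₂ * y)
  have hexpneg2 : Real.exp (-(σ₂ * y)) ≤ 1 := by
    rw [Real.exp_le_one_iff]
    nlinarith
  have hcosa : Real.exp (σ₂ * y) / 8 ≤ ‖Complex.cos ((σ₂ : ℂ) * z) + (a : ℂ)‖ := by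
    have h1 := cos_lower ((σ₂ : ℂ) * z)
    rw [him2] at h1
    have h2 : ‖Complex.cos ((σ₂ : ℂ) * z)‖ ≤ ‖Complex.cos ((σ₂ : ℂ) * z) + (a : ℂ)‖ + |a| := by
      have := norm_add_le (Complex.cos ((σ₂ : ℂ) * z) + (a : ℂ)) (-(a : ℂ))
      simpa using this
    nlinarith
  -- assemble
  rw [norm_mul, norm_mul, norm_mul, norm_inv,
    Complex.norm_real, Real.norm_eq_abs, abs_of_pos hσ₁, habsz, him]
  have hsq : 0 ≤ Real.sqrt |t| := Real.sqrt_nonneg _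
  have hmul : Real.exp ((σ₁ + σ₂) * y) = Real.exp (σ₁ * y) * Real.exp (σ₂ * y) := by
    rw [← Real.exp_add]; ring_nf
  calc σ₁⁻¹ / 32 * Real.sqrt |t| * Real.exp ((σ₁ + σ₂) * y)
      = σ₁⁻¹ * Real.sqrt |t| * (Real.exp (σ₁ * y) / 4 * (Real.exp (σ₂ * y) / 8)) := by
        rw [hmul]; ring
    _ ≤ σ₁⁻¹ * Real.sqrt |t| * (‖Complex.sin ((σ₁ : ℂ) * z)‖ * ‖Complex.cos ((σ₂ : ℂ) * z) + (a : ℂ)‖) := by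
        apply mul_le_mul_of_nonneg_left _ (by positivity)
        apply mul_le_mul hsin hcosa (by positivity) (norm_nonneg _)
    _ = σ₁⁻¹ * Real.sqrt |t| * ‖Complex.sin ((σ₁ : ℂ) * z)‖ * ‖Complex.cos ((σ₂ : ℂ) * z) + (a : ℂ)‖ := by
        ring
end

section
/- Let κ : ℕ → ℂ be a sequence of nonzero complex numbers for which there exists c > 0 with |κ(n)| ≥ c·(n+1)² for all n ∈ ℕ. Then: (1) for every λ ∈ ℂ the family (1 − λ/κ(n))_{n∈ℕ} is multipliable; (2) the function Φ(λ) = ∏'_{n∈ℕ} (1 − λ/κ(n)) is entire (complex differentiable on all of ℂ); and (3) for every p > 1/2 there exists a constant C > 0 such that |Φ(λ)| ≤ C·exp(|λ|^p) for all λ ∈ ℂ, i.e. Φ has order at most 1/2. -/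
open Complex Finset Filter

private lemma prod_one_add_sub_one_le (f : ℕ → ℂ) (s : Finset ℕ) :
    ‖∏ i ∈ s, (1 + f i) - 1‖ ≤ ∏ i ∈ s, (1 + ‖f i‖) - 1 := by
  induction s using Finset.cons_induction with
  | empty => simp
  | cons a s ha ih =>
    rw [Finset.prod_cons, Finset.prod_cons]
    set P := ∏ i ∈ s, (1 + f i) with hP_def
    set Q := ∏ i ∈ s, (1 + ‖f i‖) with hQ_def
    have hQ1 : (1:ℝ) ≤ Q := by
      rw [hQ_def]
      calc (1:ℝ) = ∏ _i ∈ s, 1 := Finset.prod_const_one.symm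
        _ ≤ ∏ i ∈ s, (1 + ‖f i‖) := Finset.prod_le_prod (fun i _ => zero_le_one)
            (fun i _ => le_add_of_nonneg_right (norm_nonneg _))
    have hP : ‖P‖ ≤ Q := by
      rw [hP_def, hQ_def, norm_prod]
      exact Finset.prod_le_prod (fun i _ => norm_nonneg _)
        (fun i _ => (norm_add_le _ _).trans (by simp))
    have h1 : ‖(1 + f a) * P - 1‖ ≤ ‖P - 1‖ + ‖f a‖ * ‖P‖ := by
      have h : (1 + f a) * P - 1 = (P - 1) + f a * P := by ring
      rw [h]
      exact (norm_add_le _ _).trans (by rw [norm_mul])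
    have h2 := norm_nonneg (f a)
    nlinarith [ih, norm_nonneg (P - 1), norm_nonneg P]

private lemma norm_prod_le_exp_sum (f : ℕ → ℂ) (g : ℕ → ℝ)
    (h : ∀ i, ‖1 + f i‖ ≤ Real.exp (g i)) (s : Finset ℕ) :
    ‖∏ i ∈ s, (1 + f i)‖ ≤ Real.exp (∑ i ∈ s, g i) := by
  rw [norm_prod, Real.exp_sum]
  exact Finset.prod_le_prod (fun i _ => norm_nonneg _) (fun i _ => h i)

private lemma prod_sub_one_le_exp (f : ℕ → ℂ) (b : ℕ → ℝ) (hfb : ∀ i, ‖f i‖ ≤ b i)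
    (s : Finset ℕ) {t : ℝ} (hst : ∑ i ∈ s, b i ≤ t) :
    ‖∏ i ∈ s, (1 + f i) - 1‖ ≤ Real.exp t - 1 := by
  refine (prod_one_add_sub_one_le f s).trans ?_
  have h : ∏ i ∈ s, (1 + ‖f i‖) ≤ Real.exp t := by
    calc ∏ i ∈ s, (1 + ‖f i‖) ≤ Real.exp (∑ i ∈ s, b i) := by
          rw [Real.exp_sum]
          refine Finset.prod_le_prod (fun i _ => by positivity) (fun i _ => ?_)
          have := Real.add_one_le_exp (b i)
          linarith [hfb i]
      _ ≤ Real.exp t := Real.exp_le_exp.mpr hst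
  linarith

private lemma sum_tail_le (b : ℕ → ℝ) (hb : Summable b) (h0 : ∀ i, 0 ≤ b i) (N : ℕ)
    (s : Finset ℕ) (hs : ∀ i ∈ s, N ≤ i) :
    ∑ i ∈ s, b i ≤ (∑' i, b i) - ∑ i ∈ Finset.range N, b i := by
  have hdisj : Disjoint (Finset.range N) s := by
    rw [Finset.disjoint_left]
    intro i hi his
    exact absurd (hs i his) (Nat.not_le.mpr (Finset.mem_range.mp hi))
  have hle : ∑ i ∈ Finset.range N ∪ s, b i ≤ ∑' i, b i :=
    Summable.sum_le_tsum _ (fun i _ => h0 i) hb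
  rw [Finset.sum_union hdisj] at hle
  linarith

private lemma one_add_le_exp_rpow {x q : ℝ} (hx : 0 ≤ x) (hq1 : 1/2 ≤ q) (hq2 : q ≤ 1) :
    1 + x ≤ Real.exp (x ^ q) := by
  rcases eq_or_lt_of_le hx with h0 | hx0
  · rw [← h0, Real.zero_rpow (by linarith : q ≠ 0)]
    simp
  rcases le_total x 1 with h1 | h1
  · have hxq : x ≤ x ^ q := by
      calc x = x ^ (1:ℝ) := (Real.rpow_one x).symm
        _ ≤ x ^ q := Real.rpow_le_rpow_of_exponent_ge hx0 h1 hq2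
    linarith [Real.add_one_le_exp (x ^ q)]
  · have hs : x ^ (1/2 : ℝ) ≤ x ^ q := Real.rpow_le_rpow_of_exponent_le h1 hq1
    set s := x ^ (1/2 : ℝ) with hs_def
    have hs0 : 0 ≤ s := Real.rpow_nonneg hx _
    have hsx : s ^ 2 = x := by
      rw [hs_def, ← Real.rpow_natCast (x ^ (1/2:ℝ)) 2, ← Real.rpow_mul hx]
      norm_num
    have hcubic : 1 + x ≤ Real.exp s := by
      have h4 := Real.sum_le_exp_of_nonneg hs0 4
      have hsum : ∑ i ∈ Finset.range 4, s ^ i / (Nat.factorial i) =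
          1 + s + s^2/2 + s^3/6 := by
        simp [Finset.sum_range_succ, Nat.factorial]
      rw [hsum] at h4
      nlinarith [hs0, hsx, mul_nonneg hs0 (sq_nonneg (s - 3/2))]
    exact hcubic.trans (Real.exp_le_exp.mpr hs)

/-- Canonical products over a sequence with `1/κ_n = O(1/n²)`: the product
`Φ(λ) = ∏' (1 - λ/κ_n)` converges, is entire, and has order at most `1/2`. -/
theorem canonical_product_order_half
    (κ : ℕ → ℂ) (hκ0 : ∀ n, κ n ≠ 0)
    (c : ℝ) (hc : 0 < c) (hκ : ∀ n : ℕ, c * ((n : ℝ) + 1) ^ 2 ≤ ‖κ n‖) :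
    (∀ lam : ℂ, Multipliable fun n : ℕ => 1 - lam / κ n) ∧
    Differentiable ℂ (fun lam : ℂ => ∏' n : ℕ, (1 - lam / κ n)) ∧
    ∀ p : ℝ, 1/2 < p → ∃ C : ℝ, 0 < C ∧ ∀ lam : ℂ,
      ‖∏' n : ℕ, (1 - lam / κ n)‖ ≤ C * Real.exp (‖lam‖ ^ p) := by
  -- the dominating sequence
  set b : ℝ → ℕ → ℝ := fun r n => r / (c * ((n : ℝ) + 1) ^ 2) with hb_def
  have hb0 : ∀ r : ℝ, 0 ≤ r → ∀ n : ℕ, 0 ≤ b r n := by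
    intro r hr n
    have : (0:ℝ) < c * ((n : ℝ) + 1) ^ 2 := by positivity
    exact div_nonneg hr this.le
  have hs2 : Summable (fun n : ℕ => ((((n : ℝ) + 1)) ^ 2)⁻¹) := by
    have h1 : Summable (fun n : ℕ => 1 / (n : ℝ) ^ (2:ℕ)) :=
      Real.summable_one_div_nat_pow.mpr (by norm_num)
    have h2 := (summable_nat_add_iff 1).mpr h1
    apply h2.congr
    intro n
    push_cast
    rw [one_div]
  have hbsum : ∀ r : ℝ, Summable (b r) := by
    intro r
    have h : b r = fun n : ℕ => (r / c) * ((((n : ℝ) + 1)) ^ 2)⁻¹ := by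
      funext n
      rw [hb_def]
      field_simp
    rw [h]
    exact hs2.mul_left _
  have hA : ∀ (lam : ℂ) (r : ℝ), ‖lam‖ ≤ r → ∀ n : ℕ, ‖lam / κ n‖ ≤ b r n := by
    intro lam r hr n
    rw [norm_div, hb_def]
    have h1 : (0:ℝ) < c * ((n : ℝ) + 1) ^ 2 := by positivity
    have h2 : c * ((n : ℝ) + 1) ^ 2 ≤ ‖κ n‖ := hκ n
    calc ‖lam‖ / ‖κ n‖ ≤ ‖lam‖ / (c * ((n : ℝ) + 1) ^ 2) := by
          gcongr
      _ ≤ r / (c * ((n : ℝ) + 1) ^ 2) := by gcongr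
  -- rewrite factors as `1 + f i`
  have hsub : ∀ (lam : ℂ) (n : ℕ), 1 - lam / κ n = 1 + (-(lam / κ n)) := by
    intro lam n; ring
  -- norm of partial products
  have hFnorm : ∀ (r : ℝ) (lam : ℂ), ‖lam‖ ≤ r → ∀ s : Finset ℕ,
      ‖∏ i ∈ s, (1 - lam / κ i)‖ ≤ Real.exp (∑ i ∈ s, b r i) := by
    intro r lam hl s
    simp_rw [hsub lam]
    refine norm_prod_le_exp_sum _ _ (fun i => ?_) s
    have h1 : ‖(1:ℂ) + (-(lam / κ i))‖ ≤ 1 + ‖lam / κ i‖ := by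
      refine (norm_add_le _ _).trans ?_
      simp
    have h2 := hA lam r hl i
    have h3 := Real.add_one_le_exp (b r i)
    linarith
  -- difference between partial products over nested finsets
  have hdiffFs : ∀ (r : ℝ), 0 ≤ r → ∀ (lam : ℂ), ‖lam‖ ≤ r → ∀ (N : ℕ) (s : Finset ℕ),
      Finset.range N ⊆ s →
      ‖(∏ i ∈ s, (1 - lam / κ i)) - ∏ i ∈ Finset.range N, (1 - lam / κ i)‖ ≤
        Real.exp (∑' i, b r i) *
          (Real.exp ((∑' i, b r i) - ∑ i ∈ Finset.range N, b r i) - 1) := by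
    intro r hr lam hl N s hNs
    have hsplit : ∏ i ∈ s, (1 - lam / κ i) =
        (∏ i ∈ Finset.range N, (1 - lam / κ i)) * ∏ i ∈ s \ Finset.range N, (1 - lam / κ i) := by
      rw [mul_comm, Finset.prod_sdiff hNs]
    rw [hsplit]
    have heq : (∏ i ∈ Finset.range N, (1 - lam / κ i)) * (∏ i ∈ s \ Finset.range N, (1 - lam / κ i))
        - ∏ i ∈ Finset.range N, (1 - lam / κ i)
        = (∏ i ∈ Finset.range N, (1 - lam / κ i)) *
          ((∏ i ∈ s \ Finset.range N, (1 - lam / κ i)) - 1) := by ring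
    rw [heq, norm_mul]
    have h1 : ‖∏ i ∈ Finset.range N, (1 - lam / κ i)‖ ≤ Real.exp (∑' i, b r i) := by
      refine (hFnorm r lam hl _).trans (Real.exp_le_exp.mpr ?_)
      exact Summable.sum_le_tsum _ (fun i _ => hb0 r hr i) (hbsum r)
    have h2 : ‖(∏ i ∈ s \ Finset.range N, (1 - lam / κ i)) - 1‖ ≤
        Real.exp ((∑' i, b r i) - ∑ i ∈ Finset.range N, b r i) - 1 := by
      simp_rw [hsub lam]
      refine prod_sub_one_le_exp _ (b r) (fun i => by simpa using hA lam r hl i) _ ?_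
      refine sum_tail_le (b r) (hbsum r) (hb0 r hr) N _ (fun i hi => ?_)
      have := Finset.mem_sdiff.mp hi
      exact Nat.le_of_not_lt (fun h => this.2 (Finset.mem_range.mpr h))
    have h3 : (0:ℝ) ≤ ‖(∏ i ∈ s \ Finset.range N, (1 - lam / κ i)) - 1‖ := norm_nonneg _
    exact mul_le_mul h1 h2 h3 (Real.exp_pos _).le
  -- the error bound tends to zero
  have htail0 : ∀ r : ℝ, Filter.Tendsto (fun N : ℕ => Real.exp (∑' i, b r i) *
      (Real.exp ((∑' i, b r i) - ∑ i ∈ Finset.range N, b r i) - 1)) Filter.atTop (nhds 0) := by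
    intro r
    have h1 : Filter.Tendsto (fun N : ℕ => ∑ i ∈ Finset.range N, b r i) Filter.atTop
        (nhds (∑' i, b r i)) := (hbsum r).hasSum.tendsto_sum_nat
    have h2 : Filter.Tendsto (fun N : ℕ => (∑' i, b r i) - ∑ i ∈ Finset.range N, b r i)
        Filter.atTop (nhds 0) := by
      have := (tendsto_const_nhds (x := ∑' i, b r i)).sub h1
      simpa using this
    have h3 := ((Real.continuous_exp.tendsto 0).comp h2).sub (tendsto_const_nhds (x := (1:ℝ)))
    have h4 := (tendsto_const_nhds (x := Real.exp (∑' i, b r i))).mul h3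
    simpa using h4
  -- multipliability
  have hmult : ∀ lam : ℂ, Multipliable fun n : ℕ => 1 - lam / κ n := by
    intro lam
    have hcs : CauchySeq (fun s : Finset ℕ => ∏ i ∈ s, (1 - lam / κ i)) := by
      rw [Metric.cauchySeq_iff']
      intro ε hε
      obtain ⟨N, hN⟩ := ((htail0 ‖lam‖).eventually_lt_const hε).exists
      refine ⟨Finset.range N, fun s hs => ?_⟩
      rw [dist_eq_norm]
      exact lt_of_le_of_lt (hdiffFs ‖lam‖ (norm_nonneg _) lam le_rfl N s hs) hN
    obtain ⟨a, ha⟩ := cauchySeq_tendsto_of_complete hcs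
    exact ⟨a, ha⟩
  have htendsto : ∀ lam : ℂ, Filter.Tendsto (fun N : ℕ => ∏ n ∈ Finset.range N, (1 - lam / κ n))
      Filter.atTop (nhds (∏' n : ℕ, (1 - lam / κ n))) :=
    fun lam => (hmult lam).hasProd.tendsto_prod_nat
  -- uniform error bound for the tprod
  have hΦsub : ∀ (r : ℝ), 0 ≤ r → ∀ (lam : ℂ), ‖lam‖ ≤ r → ∀ N : ℕ,
      ‖(∏' n : ℕ, (1 - lam / κ n)) - ∏ i ∈ Finset.range N, (1 - lam / κ i)‖ ≤
        Real.exp (∑' i, b r i) *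
          (Real.exp ((∑' i, b r i) - ∑ i ∈ Finset.range N, b r i) - 1) := by
    intro r hr lam hl N
    refine le_of_tendsto (((htendsto lam).sub tendsto_const_nhds).norm) ?_
    filter_upwards [Filter.eventually_ge_atTop N] with M hM
    exact hdiffFs r hr lam hl N (Finset.range M) (Finset.range_subset_range.mpr hM)
  -- differentiability of partial products
  have hFdiffable : ∀ N : ℕ, Differentiable ℂ
      (fun lam : ℂ => ∏ n ∈ Finset.range N, (1 - lam / κ n)) := by
    intro N
    induction N with
    | zero => simpa using differentiable_const (1:ℂ)
    | succ N ih =>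
      have : (fun lam : ℂ => ∏ n ∈ Finset.range (N+1), (1 - lam / κ n)) =
          fun lam : ℂ => (∏ n ∈ Finset.range N, (1 - lam / κ n)) * (1 - lam / κ N) := by
        funext lam; rw [Finset.prod_range_succ]
      rw [this]
      exact ih.mul ((differentiable_const _).sub (differentiable_id.div_const _))
  -- entire
  have hdiff : Differentiable ℂ (fun lam : ℂ => ∏' n : ℕ, (1 - lam / κ n)) := by
    intro z
    have hR : (0:ℝ) < ‖z‖ + 1 := by positivity
    have hTU : TendstoUniformlyOn (fun N : ℕ => fun lam : ℂ => ∏ n ∈ Finset.range N, (1 - lam / κ n))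
        (fun lam : ℂ => ∏' n : ℕ, (1 - lam / κ n)) Filter.atTop (Metric.ball (0:ℂ) (‖z‖+1)) := by
      rw [Metric.tendstoUniformlyOn_iff]
      intro ε hε
      filter_upwards [(htail0 (‖z‖+1)).eventually_lt_const hε] with N hN lam hlam
      rw [dist_eq_norm]
      refine lt_of_le_of_lt (hΦsub (‖z‖+1) hR.le lam ?_ N) hN
      have := Metric.mem_ball.mp hlam
      rw [dist_eq_norm, sub_zero] at this
      exact this.le
    have hDO : DifferentiableOn ℂ (fun lam : ℂ => ∏' n : ℕ, (1 - lam / κ n))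
        (Metric.ball (0:ℂ) (‖z‖+1)) := by
      refine hTU.tendstoLocallyUniformlyOn.differentiableOn ?_ Metric.isOpen_ball
      exact Filter.Eventually.of_forall fun N => (hFdiffable N).differentiableOn
    have hz : z ∈ Metric.ball (0:ℂ) (‖z‖+1) := by
      rw [Metric.mem_ball, dist_eq_norm, sub_zero]
      linarith
    exact hDO.differentiableAt (Metric.isOpen_ball.mem_nhds hz)
  refine ⟨hmult, hdiff, ?_⟩
  intro p hp
  set m := min p 1 with hm_def
  have hm : 1/2 < m := lt_min hp (by norm_num)
  set q := (1/2 + m)/2 with hq_def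
  have hq1 : 1/2 < q := by rw [hq_def]; linarith
  have hq2 : q ≤ 1 := by
    have h1 : m ≤ 1 := min_le_right p 1
    rw [hq_def]; linarith
  have hqp : q < p := by
    have h1 : m ≤ p := min_le_left p 1
    rw [hq_def]; linarith
  have hq0 : 0 ≤ q := by linarith
  have h2q : (1:ℝ) < 2*q := by linarith
  have hZsum : Summable (fun n : ℕ => (((n:ℝ)+1) ^ (2*q))⁻¹) := by
    have h1 : Summable (fun n : ℕ => 1 / (n:ℝ) ^ (2*q)) :=
      Real.summable_one_div_nat_rpow.mpr h2q
    have h2 := (summable_nat_add_iff 1).mpr h1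
    apply h2.congr
    intro n
    push_cast
    rw [one_div]
  set Z := ∑' n : ℕ, (((n:ℝ)+1) ^ (2*q))⁻¹ with hZ_def
  have hZ0 : 0 ≤ Z := tsum_nonneg (fun n => by positivity)
  have hbq : ∀ (r : ℝ), 0 ≤ r → ∀ n : ℕ,
      (b r n) ^ q = (r/c) ^ q * (((n:ℝ)+1) ^ (2*q))⁻¹ := by
    intro r hr n
    have hx : (0:ℝ) ≤ (n:ℝ) + 1 := by positivity
    have h1 : b r n = (r/c) * ((((n:ℝ)+1)) ^ 2)⁻¹ := by
      rw [hb_def]; field_simp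
    rw [h1, Real.mul_rpow (by positivity) (by positivity), Real.inv_rpow (by positivity),
      ← Real.rpow_natCast ((n:ℝ)+1) 2, ← Real.rpow_mul hx]
    norm_num
  have hΦle : ∀ lam : ℂ, ‖∏' n : ℕ, (1 - lam / κ n)‖ ≤
      Real.exp ((‖lam‖/c) ^ q * Z) := by
    intro lam
    refine le_of_tendsto (htendsto lam).norm ?_
    refine Filter.Eventually.of_forall fun N => ?_
    have hstep : ‖∏ n ∈ Finset.range N, (1 - lam / κ n)‖ ≤
        Real.exp (∑ n ∈ Finset.range N, (b ‖lam‖ n) ^ q) := by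
      simp_rw [hsub lam]
      refine norm_prod_le_exp_sum _ _ (fun i => ?_) _
      have h1 : ‖(1:ℂ) + (-(lam / κ i))‖ ≤ 1 + b ‖lam‖ i := by
        refine (norm_add_le _ _).trans ?_
        have := hA lam ‖lam‖ le_rfl i
        simp only [norm_one, norm_neg]
        linarith
      exact h1.trans (one_add_le_exp_rpow (hb0 _ (norm_nonneg lam) i) hq1.le hq2)
    refine hstep.trans (Real.exp_le_exp.mpr ?_)
    have hsumq : Summable (fun n : ℕ => (b ‖lam‖ n) ^ q) := by
      have h : (fun n : ℕ => (b ‖lam‖ n) ^ q) =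
          fun n : ℕ => (‖lam‖/c) ^ q * (((n:ℝ)+1) ^ (2*q))⁻¹ := by
        funext n; exact hbq ‖lam‖ (norm_nonneg lam) n
      rw [h]; exact hZsum.mul_left _
    calc ∑ n ∈ Finset.range N, (b ‖lam‖ n) ^ q ≤ ∑' n, (b ‖lam‖ n) ^ q :=
          Summable.sum_le_tsum _ (fun i _ => Real.rpow_nonneg (hb0 _ (norm_nonneg lam) i) q) hsumq
      _ = (‖lam‖/c) ^ q * Z := by
          rw [hZ_def, ← tsum_mul_left]
          exact tsum_congr fun n => hbq ‖lam‖ (norm_nonneg lam) n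
  set K := Z / c ^ q with hK_def
  have hK0 : 0 ≤ K := div_nonneg hZ0 (Real.rpow_nonneg hc.le q)
  set R0 := max 1 (K ^ (p - q)⁻¹) with hR0_def
  have hR01 : (1:ℝ) ≤ R0 := le_max_left _ _
  set B := K * R0 ^ q with hB_def
  have hB0 : 0 ≤ B := mul_nonneg hK0 (Real.rpow_nonneg (by linarith) q)
  have hclaim : ∀ r : ℝ, 0 ≤ r → K * r ^ q ≤ B + r ^ p := by
    intro r hr
    rcases le_total r R0 with h | h
    · have h1 : r ^ q ≤ R0 ^ q := Real.rpow_le_rpow hr h hq0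
      have h2 : (0:ℝ) ≤ r ^ p := Real.rpow_nonneg hr p
      calc K * r ^ q ≤ K * R0 ^ q := mul_le_mul_of_nonneg_left h1 hK0
        _ = B := hB_def.symm
        _ ≤ B + r ^ p := le_add_of_nonneg_right h2
    · have hr1 : (1:ℝ) ≤ r := le_trans hR01 h
      have hKle : K ≤ r ^ (p - q) := by
        calc K = (K ^ (p - q)⁻¹) ^ (p - q) :=
              (Real.rpow_inv_rpow hK0 (by linarith : p - q ≠ 0)).symm
          _ ≤ R0 ^ (p - q) :=
              Real.rpow_le_rpow (Real.rpow_nonneg hK0 _) (le_max_right _ _) (by linarith)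
          _ ≤ r ^ (p - q) := Real.rpow_le_rpow (by linarith) h (by linarith)
      have h3 : r ^ (p - q) * r ^ q = r ^ p := by
        rw [← Real.rpow_add (by linarith : (0:ℝ) < r)]
        congr 1
        ring
      calc K * r ^ q ≤ r ^ (p - q) * r ^ q :=
            mul_le_mul_of_nonneg_right hKle (Real.rpow_nonneg hr q)
        _ = r ^ p := h3
        _ ≤ B + r ^ p := le_add_of_nonneg_left hB0
  refine ⟨Real.exp B, Real.exp_pos B, fun lam => ?_⟩
  have h1 := hΦle lam
  have h2 : (‖lam‖/c) ^ q * Z = K * ‖lam‖ ^ q := by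
    rw [Real.div_rpow (norm_nonneg lam) hc.le, hK_def]; ring
  rw [h2] at h1
  refine h1.trans ?_
  rw [← Real.exp_add]
  exact Real.exp_le_exp.mpr (hclaim ‖lam‖ (norm_nonneg lam))
end

section
/- Let a ∈ (−1,1) and set γ_n = (n + 1/2)π + (−1)ⁿ·arcsin a for n ∈ ℕ. Then for every z ∈ ℂ the family (1 − z²/γ_n²)_{n∈ℕ} is multipliable and cos z + a = (1 + a)·∏'_{n=0}^∞ (1 − z²/γ_n²). -/
open Complex Real Filter

lemma sumAux (v : ℂ) {c : ℕ → ℝ} {δ : ℝ} (hδ : 0 < δ)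
    (hc : ∀ n : ℕ, ((n : ℝ) + 1) * δ ≤ |c n|) :
    Summable fun n : ℕ => ‖v / ((c n : ℝ) : ℂ) ^ 2‖ := by
  have hbase : Summable fun n : ℕ => ‖v‖ / δ ^ 2 * (1 / ((n : ℝ) + 1) ^ 2) := by
    apply Summable.mul_left
    have h0 : Summable fun n : ℕ => 1 / ((n : ℝ)) ^ 2 := summable_one_div_nat_pow.2 one_lt_two
    have h1 := (summable_nat_add_iff 1).2 h0
    refine h1.congr fun n => ?_
    push_cast
    ring
  refine Summable.of_nonneg_of_le (fun n => norm_nonneg _) (fun n => ?_) hbase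
  have hcn : ((n : ℝ) + 1) * δ ≤ |c n| := hc n
  have hpos : 0 < ((n : ℝ) + 1) * δ := by positivity
  calc ‖v / ((c n : ℝ) : ℂ) ^ 2‖ = ‖v‖ / |c n| ^ 2 := by
        rw [norm_div, norm_pow, Complex.norm_real, Real.norm_eq_abs]
    _ ≤ ‖v‖ / (((n : ℝ) + 1) * δ) ^ 2 := by gcongr
    _ = ‖v‖ / δ ^ 2 * (1 / ((n : ℝ) + 1) ^ 2) := by
        rw [show (((n : ℝ) + 1) * δ) ^ 2 = δ ^ 2 * ((n : ℝ) + 1) ^ 2 from by ring,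
          ← div_div, mul_one_div]

lemma multAux {u : ℕ → ℂ} (h0 : ∀ n, u n ≠ 0) (hs : Summable fun n => ‖u n - 1‖) :
    Multipliable u := by
  refine Complex.multipliable_of_summable_log ?_
  refine Summable.of_norm ?_
  refine Summable.of_norm_bounded_eventually_nat (g := fun n => 3/2 * ‖u n - 1‖)
    (hs.mul_left _) ?_
  have ht : Tendsto (fun n => ‖u n - 1‖) atTop (nhds 0) := hs.tendsto_atTop_zero
  filter_upwards [ht.eventually_lt_const (by norm_num : (0:ℝ) < 1/2)] with n hn
  have h2 : ‖Complex.log (1 + (u n - 1))‖ ≤ 3/2 * ‖u n - 1‖ :=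
    Complex.norm_log_one_add_half_le_self hn.le
  rw [show (1 : ℂ) + (u n - 1) = u n from by ring] at h2
  simpa using h2

lemma eulerAux (w : ℂ) (hm : Multipliable fun j : ℕ => 1 - w ^ 2 / ((j : ℂ) + 1) ^ 2) :
    (π : ℂ) * w * ∏' j : ℕ, (1 - w ^ 2 / ((j : ℂ) + 1) ^ 2) = Complex.sin (π * w) :=
  tendsto_nhds_unique (hm.hasProd.tendsto_prod_nat.const_mul _)
    (Complex.tendsto_euler_sin_prod w)

lemma multE (w : ℂ) (h0 : ∀ j : ℕ, 1 - w ^ 2 / ((j : ℂ) + 1) ^ 2 ≠ 0) :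
    Multipliable fun j : ℕ => 1 - w ^ 2 / ((j : ℂ) + 1) ^ 2 := by
  apply multAux h0
  have hb := sumAux (w ^ 2) (c := fun n : ℕ => (n : ℝ) + 1) (δ := 1) one_pos
    (fun n => by rw [abs_of_pos (by positivity), mul_one])
  refine hb.congr fun n => ?_
  rw [show ((((n : ℝ) + 1) : ℝ) : ℂ) = (n : ℂ) + 1 from by push_cast; ring,
    show (1 : ℂ) - w ^ 2 / ((n : ℂ) + 1) ^ 2 - 1 = -(w ^ 2 / ((n : ℂ) + 1) ^ 2) from by ring,
    norm_neg]

set_option maxHeartbeats 1000000 in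
lemma pairAux (B Z K q : ℂ) (hK : K ≠ 0) (hq : q ≠ 0)
    (h1 : 2 * K * q - B ≠ 0) (h2 : 2 * K * q + B ≠ 0) :
    ((1 : ℂ) - ((B + Z) / (2 * q)) ^ 2 / K ^ 2) * ((1 : ℂ) - ((B - Z) / (2 * q)) ^ 2 / K ^ 2)
    = (((1 : ℂ) - Z ^ 2 / (2 * K * q - B) ^ 2) * ((1 : ℂ) - Z ^ 2 / (2 * K * q + B) ^ 2)) *
      (((1 : ℂ) - (B / (2 * q)) ^ 2 / K ^ 2) * ((1 : ℂ) - (B / (2 * q)) ^ 2 / K ^ 2)) := by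
  have h2q : (2 * q) ≠ 0 := mul_ne_zero two_ne_zero hq
  have hD : ((2 * q) ^ 2 * K ^ 2) ≠ 0 := mul_ne_zero (pow_ne_zero 2 h2q) (pow_ne_zero 2 hK)
  simp only [div_pow, div_div]
  rw [one_sub_div hD, one_sub_div hD, one_sub_div hD, one_sub_div (pow_ne_zero 2 h1),
    one_sub_div (pow_ne_zero 2 h2)]
  simp only [div_mul_div_comm]
  rw [div_eq_div_iff (mul_ne_zero hD hD)
    (mul_ne_zero (mul_ne_zero (pow_ne_zero 2 h1) (pow_ne_zero 2 h2)) (mul_ne_zero hD hD))]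
  ring

set_option maxHeartbeats 1000000 in
/-- Product expansion of `cos z + a` over its zeros `±γ_n`,
`γ_n = (n + 1/2)π + (-1)ⁿ arcsin a`. -/
theorem cos_add_const_product_expansion
    (a : ℝ) (ha : a ∈ Set.Ioo (-1 : ℝ) 1)
    (γ : ℕ → ℝ) (hγ : ∀ n : ℕ, γ n = ((n : ℝ) + 1/2) * π + (-1) ^ n * Real.arcsin a) :
    ∀ z : ℂ,
      (Multipliable fun n : ℕ => 1 - z ^ 2 / ((γ n : ℂ)) ^ 2) ∧
      Complex.cos z + (a : ℂ) =
        ((1 : ℂ) + (a : ℂ)) * ∏' n : ℕ, (1 - z ^ 2 / ((γ n : ℂ)) ^ 2) := by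
  obtain ⟨ha1, ha2⟩ := ha
  intro z
  have h_as : |Real.arcsin a| < π / 2 :=
    abs_lt.2 ⟨Real.neg_pi_div_two_lt_arcsin.2 ha1, Real.arcsin_lt_pi_div_two.2 ha2⟩
  set δ : ℝ := π / 2 - |Real.arcsin a| with hδdef
  have hδ : 0 < δ := by simp only [hδdef]; linarith
  have hδπ : δ ≤ π := by
    have := abs_nonneg (Real.arcsin a)
    have := Real.pi_pos
    simp only [hδdef]; linarith
  have hγ_lb : ∀ n : ℕ, ((n : ℝ) + 1) * δ ≤ γ n := by
    intro n
    rw [hγ n]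
    have h1 : -|Real.arcsin a| ≤ (-1 : ℝ) ^ n * Real.arcsin a := by
      have habs : |(-1 : ℝ) ^ n * Real.arcsin a| = |Real.arcsin a| := by
        simp [abs_mul, abs_pow]
      linarith [neg_abs_le ((-1 : ℝ) ^ n * Real.arcsin a), habs.le]
    have hn : (0 : ℝ) ≤ n := n.cast_nonneg
    have hπ := Real.pi_pos
    have habs0 := abs_nonneg (Real.arcsin a)
    nlinarith [mul_nonneg hn hπ.le, mul_nonneg hn habs0]
  have hγ_pos : ∀ n : ℕ, 0 < γ n := fun n => lt_of_lt_of_le (by positivity) (hγ_lb n)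
  have hγ_ne : ∀ n : ℕ, ((γ n : ℝ) : ℂ) ≠ 0 := fun n => Complex.ofReal_ne_zero.2 (hγ_pos n).ne'
  by_cases hz : ∃ m : ℕ, z ^ 2 = ((γ m : ℂ)) ^ 2
  · -- a zero of the product and of cos z + a
    obtain ⟨m, hm⟩ := hz
    have hf0 : (1 : ℂ) - z ^ 2 / ((γ m : ℂ)) ^ 2 = 0 := by
      rw [hm, div_self (pow_ne_zero 2 (hγ_ne m))]
      ring
    have hprod : HasProd (fun n : ℕ => 1 - z ^ 2 / ((γ n : ℂ)) ^ 2) 0 := by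
      have hev : ∀ᶠ s : Finset ℕ in atTop,
          (0 : ℂ) = ∏ i ∈ s, (1 - z ^ 2 / ((γ i : ℂ)) ^ 2) := by
        filter_upwards [Filter.eventually_ge_atTop ({m} : Finset ℕ)] with s hs
        exact (Finset.prod_eq_zero (hs (Finset.mem_singleton_self m)) hf0).symm
      exact tendsto_const_nhds.congr' hev
    have hcγ : Real.cos (γ m) = -a := by
      rw [hγ m, show ((m : ℝ) + 1/2) * π + (-1) ^ m * Real.arcsin a
          = ((m + 1 : ℕ) : ℝ) * π - (π / 2 - (-1) ^ m * Real.arcsin a) from by push_cast; ring,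
        Real.cos_nat_mul_pi_sub, Real.cos_pi_div_two_sub]
      rcases Nat.even_or_odd m with hpar | hpar
      · rw [Even.neg_one_pow hpar, Odd.neg_one_pow hpar.add_one, one_mul,
          Real.sin_arcsin ha1.le ha2.le]
        ring
      · rw [Odd.neg_one_pow hpar, Even.neg_one_pow hpar.add_one, neg_one_mul,
          Real.sin_neg, Real.sin_arcsin ha1.le ha2.le]
        ring
    have hcos : Complex.cos z + (a : ℂ) = 0 := by
      rcases sq_eq_sq_iff_eq_or_eq_neg.1 hm with h | h
      · rw [h, ← Complex.ofReal_cos, hcγ]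
        push_cast; ring
      · rw [h, Complex.cos_neg, ← Complex.ofReal_cos, hcγ]
        push_cast; ring
    exact ⟨hprod.multipliable, by rw [hprod.tprod_eq, hcos, mul_zero]⟩
  · push_neg at hz
    set b : ℝ := π / 2 + Real.arcsin a with hbdef
    have hb0 : 0 < b := by simp only [hbdef]; linarith [abs_lt.1 h_as]
    have hbπ : b < π := by
      have := abs_lt.1 h_as
      simp only [hbdef]; linarith [Real.pi_pos]
    have hπc : ((π : ℝ) : ℂ) ≠ 0 := Complex.ofReal_ne_zero.2 Real.pi_ne_zero
    have hbne : ((b : ℝ) : ℂ) ≠ 0 := Complex.ofReal_ne_zero.2 hb0.ne'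
    have hbr : γ 0 = b := by rw [hγ 0, hbdef]; push_cast; ring
    have hbc : ((γ 0 : ℝ) : ℂ) = ((b : ℝ) : ℂ) := by rw [hbr]
    have hoddr : ∀ k : ℕ, γ (2 * k + 1) = 2 * ((k : ℝ) + 1) * π - b := by
      intro k
      rw [hγ, Odd.neg_one_pow ⟨k, by ring⟩]
      push_cast
      simp only [hbdef]
      ring
    have hevenr : ∀ k : ℕ, γ (2 * k + 2) = 2 * ((k : ℝ) + 1) * π + b := by
      intro k
      rw [hγ, Even.neg_one_pow ⟨k + 1, by ring⟩]
      push_cast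
      simp only [hbdef]
      ring
    have hoddc : ∀ k : ℕ, ((γ (2 * k + 1) : ℝ) : ℂ)
        = 2 * ((k : ℂ) + 1) * (π : ℂ) - (b : ℂ) := by
      intro k; rw [hoddr k]; push_cast; ring
    have hevenc : ∀ k : ℕ, ((γ (2 * k + 2) : ℝ) : ℂ)
        = 2 * ((k : ℂ) + 1) * (π : ℂ) + (b : ℂ) := by
      intro k; rw [hevenr k]; push_cast; ring
    -- nonvanishing of all the factors
    have hfne : ∀ n : ℕ, (1 : ℂ) - z ^ 2 / ((γ n : ℂ)) ^ 2 ≠ 0 := by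
      intro n h
      apply hz n
      have h1 : z ^ 2 / ((γ n : ℂ)) ^ 2 = 1 := by linear_combination -h
      exact (div_eq_one_iff_eq (pow_ne_zero 2 (hγ_ne n))).1 h1
    have key_sq : ∀ (x : ℂ) (j : ℕ),
        (1 : ℂ) - (x / (2 * π)) ^ 2 / ((j : ℂ) + 1) ^ 2 = 0 →
        x ^ 2 = (2 * ((j : ℂ) + 1) * π) ^ 2 := by
      intro x j h
      have hj : ((j : ℂ) + 1) ≠ 0 := Nat.cast_add_one_ne_zero j
      have h1 : (x / (2 * π)) ^ 2 = ((j : ℂ) + 1) ^ 2 := by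
        have h2 : (x / (2 * π)) ^ 2 / ((j : ℂ) + 1) ^ 2 = 1 := by linear_combination -h
        exact (div_eq_one_iff_eq (pow_ne_zero 2 hj)).1 h2
      have h2π : (2 * (π : ℂ)) ≠ 0 := by
        simp [hπc]
      field_simp at h1
      linear_combination h1
    have hne1 : ∀ j : ℕ, (1 : ℂ) - ((((b : ℝ) : ℂ) + z) / (2 * π)) ^ 2 / ((j : ℂ) + 1) ^ 2 ≠ 0 := by
      intro j h
      have h2 := key_sq _ j h
      rcases sq_eq_sq_iff_eq_or_eq_neg.1 h2 with hcase | hcase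
      · have hzeq : z = 2 * ((j : ℂ) + 1) * π - (b : ℂ) := by linear_combination hcase
        exact hz (2 * j + 1) (by rw [hoddc j, hzeq])
      · have hzeq : z = -(2 * ((j : ℂ) + 1) * π + (b : ℂ)) := by linear_combination hcase
        exact hz (2 * j + 2) (by rw [hevenc j, hzeq]; ring)
    have hne2 : ∀ j : ℕ, (1 : ℂ) - ((((b : ℝ) : ℂ) - z) / (2 * π)) ^ 2 / ((j : ℂ) + 1) ^ 2 ≠ 0 := by
      intro j h
      have h2 := key_sq _ j h
      rcases sq_eq_sq_iff_eq_or_eq_neg.1 h2 with hcase | hcase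
      · have hzeq : z = -(2 * ((j : ℂ) + 1) * π - (b : ℂ)) := by linear_combination -hcase
        exact hz (2 * j + 1) (by rw [hoddc j, hzeq]; ring)
      · have hzeq : z = 2 * ((j : ℂ) + 1) * π + (b : ℂ) := by linear_combination -hcase
        exact hz (2 * j + 2) (by rw [hevenc j, hzeq])
    have hne3 : ∀ j : ℕ, (1 : ℂ) - (((b : ℝ) : ℂ) / (2 * π)) ^ 2 / ((j : ℂ) + 1) ^ 2 ≠ 0 := by
      intro j h
      have h2 := key_sq _ j h
      have h3 : (b : ℝ) ^ 2 = (2 * ((j : ℝ) + 1) * π) ^ 2 := by exact_mod_cast h2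
      have hj : (0 : ℝ) ≤ (j : ℝ) := j.cast_nonneg
      have h4 : π ≤ 2 * ((j : ℝ) + 1) * π := by nlinarith [Real.pi_pos]
      have h5 : b < 2 * ((j : ℝ) + 1) * π := lt_of_lt_of_le hbπ h4
      nlinarith [mul_lt_mul_of_pos_left h5 hb0, mul_lt_mul_of_pos_right h5 (lt_trans hb0 h5)]
    -- multipliability of the three Euler families
    have hm1 := multE ((((b : ℝ) : ℂ) + z) / (2 * π)) hne1
    have hm2 := multE ((((b : ℝ) : ℂ) - z) / (2 * π)) hne2
    have hm3 := multE (((b : ℝ) : ℂ) / (2 * π)) hne3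
    -- multipliability of the odd/even subfamilies of f
    have hmo : Multipliable fun k : ℕ => (1 : ℂ) - z ^ 2 / ((γ (2 * k + 1) : ℂ)) ^ 2 := by
      apply multAux (fun k => hfne _)
      have hb := sumAux (z ^ 2) (c := fun k : ℕ => γ (2 * k + 1)) hδ (fun k => by
        rw [abs_of_pos (hγ_pos _)]
        calc ((k : ℝ) + 1) * δ ≤ (((2 * k + 1 : ℕ) : ℝ) + 1) * δ := by
              have : ((k : ℝ) + 1) ≤ ((2 * k + 1 : ℕ) : ℝ) + 1 := by push_cast; linarith [k.cast_nonneg (α := ℝ)]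
              nlinarith
          _ ≤ γ (2 * k + 1) := hγ_lb _)
      refine hb.congr fun k => ?_
      rw [show (1 : ℂ) - z ^ 2 / ((γ (2 * k + 1) : ℂ)) ^ 2 - 1
          = -(z ^ 2 / ((γ (2 * k + 1) : ℂ)) ^ 2) from by ring, norm_neg]
    have hme : Multipliable fun k : ℕ => (1 : ℂ) - z ^ 2 / ((γ (2 * k + 2) : ℂ)) ^ 2 := by
      apply multAux (fun k => hfne _)
      have hb := sumAux (z ^ 2) (c := fun k : ℕ => γ (2 * k + 2)) hδ (fun k => by
        rw [abs_of_pos (hγ_pos _)]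
        calc ((k : ℝ) + 1) * δ ≤ (((2 * k + 2 : ℕ) : ℝ) + 1) * δ := by
              have : ((k : ℝ) + 1) ≤ ((2 * k + 2 : ℕ) : ℝ) + 1 := by push_cast; linarith [k.cast_nonneg (α := ℝ)]
              nlinarith
          _ ≤ γ (2 * k + 2) := hγ_lb _)
      refine hb.congr fun k => ?_
      rw [show (1 : ℂ) - z ^ 2 / ((γ (2 * k + 2) : ℂ)) ^ 2 - 1
          = -(z ^ 2 / ((γ (2 * k + 2) : ℂ)) ^ 2) from by ring, norm_neg]
    -- assemble HasProd for f
    have hg : HasProd (fun n : ℕ => (1 : ℂ) - z ^ 2 / ((γ (n + 1) : ℂ)) ^ 2)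
        ((∏' k : ℕ, ((1 : ℂ) - z ^ 2 / ((γ (2 * k + 1) : ℂ)) ^ 2)) *
         (∏' k : ℕ, ((1 : ℂ) - z ^ 2 / ((γ (2 * k + 2) : ℂ)) ^ 2))) :=
      HasProd.even_mul_odd hmo.hasProd hme.hasProd
    have hF : HasProd (fun n : ℕ => (1 : ℂ) - z ^ 2 / ((γ n : ℂ)) ^ 2)
        (((1 : ℂ) - z ^ 2 / ((γ 0 : ℂ)) ^ 2) *
          ((∏' k : ℕ, ((1 : ℂ) - z ^ 2 / ((γ (2 * k + 1) : ℂ)) ^ 2)) *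
           (∏' k : ℕ, ((1 : ℂ) - z ^ 2 / ((γ (2 * k + 2) : ℂ)) ^ 2)))) :=
      hg.zero_mul
    refine ⟨hF.multipliable, ?_⟩
    rw [hF.tprod_eq, hbc]
    -- Euler product values
    have hP1 : (((b : ℝ) : ℂ) + z) / 2 *
        ∏' j : ℕ, ((1 : ℂ) - ((((b : ℝ) : ℂ) + z) / (2 * π)) ^ 2 / ((j : ℂ) + 1) ^ 2)
        = Complex.sin ((((b : ℝ) : ℂ) + z) / 2) := by
      have h := eulerAux ((((b : ℝ) : ℂ) + z) / (2 * π)) hm1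
      rwa [show (π : ℂ) * (((((b : ℝ) : ℂ) + z)) / (2 * π)) = (((b : ℝ) : ℂ) + z) / 2 from by
        field_simp] at h
    have hP2 : (((b : ℝ) : ℂ) - z) / 2 *
        ∏' j : ℕ, ((1 : ℂ) - ((((b : ℝ) : ℂ) - z) / (2 * π)) ^ 2 / ((j : ℂ) + 1) ^ 2)
        = Complex.sin ((((b : ℝ) : ℂ) - z) / 2) := by
      have h := eulerAux ((((b : ℝ) : ℂ) - z) / (2 * π)) hm2
      rwa [show (π : ℂ) * (((((b : ℝ) : ℂ) - z)) / (2 * π)) = (((b : ℝ) : ℂ) - z) / 2 from by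
        field_simp] at h
    have hP3 : ((b : ℝ) : ℂ) / 2 *
        ∏' j : ℕ, ((1 : ℂ) - (((b : ℝ) : ℂ) / (2 * π)) ^ 2 / ((j : ℂ) + 1) ^ 2)
        = Complex.sin (((b : ℝ) : ℂ) / 2) := by
      have h := eulerAux (((b : ℝ) : ℂ) / (2 * π)) hm3
      rwa [show (π : ℂ) * ((((b : ℝ) : ℂ)) / (2 * π)) = ((b : ℝ) : ℂ) / 2 from by
        field_simp] at h
    -- pointwise pairing identity
    have hpoint : ∀ k : ℕ,
        ((1 : ℂ) - ((((b : ℝ) : ℂ) + z) / (2 * π)) ^ 2 / ((k : ℂ) + 1) ^ 2) *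
        ((1 : ℂ) - ((((b : ℝ) : ℂ) - z) / (2 * π)) ^ 2 / ((k : ℂ) + 1) ^ 2)
        = (((1 : ℂ) - z ^ 2 / ((γ (2 * k + 1) : ℂ)) ^ 2) *
            ((1 : ℂ) - z ^ 2 / ((γ (2 * k + 2) : ℂ)) ^ 2)) *
          (((1 : ℂ) - (((b : ℝ) : ℂ) / (2 * π)) ^ 2 / ((k : ℂ) + 1) ^ 2) *
            ((1 : ℂ) - (((b : ℝ) : ℂ) / (2 * π)) ^ 2 / ((k : ℂ) + 1) ^ 2)) := by
      intro k
      have h1 := hγ_ne (2 * k + 1)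
      have h2 := hγ_ne (2 * k + 2)
      rw [hoddc k] at h1
      rw [hevenc k] at h2
      rw [hoddc k, hevenc k]
      have hj : ((k : ℂ) + 1) ≠ 0 := Nat.cast_add_one_ne_zero k
      exact pairAux _ z _ _ hj hπc h1 h2
    -- product identity
    have hPP : (∏' j : ℕ, ((1 : ℂ) - ((((b : ℝ) : ℂ) + z) / (2 * π)) ^ 2 / ((j : ℂ) + 1) ^ 2)) *
        (∏' j : ℕ, ((1 : ℂ) - ((((b : ℝ) : ℂ) - z) / (2 * π)) ^ 2 / ((j : ℂ) + 1) ^ 2))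
        = ((∏' k : ℕ, ((1 : ℂ) - z ^ 2 / ((γ (2 * k + 1) : ℂ)) ^ 2)) *
            (∏' k : ℕ, ((1 : ℂ) - z ^ 2 / ((γ (2 * k + 2) : ℂ)) ^ 2))) *
          ((∏' j : ℕ, ((1 : ℂ) - (((b : ℝ) : ℂ) / (2 * π)) ^ 2 / ((j : ℂ) + 1) ^ 2)) *
            (∏' j : ℕ, ((1 : ℂ) - (((b : ℝ) : ℂ) / (2 * π)) ^ 2 / ((j : ℂ) + 1) ^ 2))) := by
      rw [← Multipliable.tprod_mul hm1 hm2, ← Multipliable.tprod_mul hmo hme, ← Multipliable.tprod_mul hm3 hm3,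
        ← Multipliable.tprod_mul (hmo.mul hme) (hm3.mul hm3)]
      exact tprod_congr hpoint
    -- trig identities
    have hcb : Complex.cos ((b : ℝ) : ℂ) = -(a : ℂ) := by
      have hr : Real.cos b = -a := by
        rw [hbdef, Real.cos_add, Real.cos_pi_div_two, Real.sin_pi_div_two,
          Real.sin_arcsin ha1.le ha2.le]
        ring
      rw [← Complex.ofReal_cos, hr]
      push_cast; ring
    have hsinsin : Complex.sin ((((b : ℝ) : ℂ) + z) / 2) * Complex.sin ((((b : ℝ) : ℂ) - z) / 2)
        = (Complex.cos z + (a : ℂ)) / 2 := by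
      have h := Complex.cos_sub_cos z ((b : ℝ) : ℂ)
      rw [hcb, show (z + ((b : ℝ) : ℂ)) / 2 = (((b : ℝ) : ℂ) + z) / 2 from by ring,
        show (z - ((b : ℝ) : ℂ)) / 2 = -((((b : ℝ) : ℂ) - z) / 2) from by ring,
        Complex.sin_neg] at h
      linear_combination -h / 2
    have hsq : Complex.sin (((b : ℝ) : ℂ) / 2) ^ 2 = (1 + (a : ℂ)) / 2 := by
      have h1 : Complex.cos (2 * (((b : ℝ) : ℂ) / 2)) = 2 * Complex.cos (((b : ℝ) : ℂ) / 2) ^ 2 - 1 :=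
        Complex.cos_two_mul _
      rw [show (2 : ℂ) * (((b : ℝ) : ℂ) / 2) = ((b : ℝ) : ℂ) from by ring, hcb] at h1
      have h2 := Complex.sin_sq_add_cos_sq (((b : ℝ) : ℂ) / 2)
      linear_combination h2 + h1 / 2
    -- final assembly
    set Po := ∏' k : ℕ, ((1 : ℂ) - z ^ 2 / ((γ (2 * k + 1) : ℂ)) ^ 2) with hPo
    set Pe := ∏' k : ℕ, ((1 : ℂ) - z ^ 2 / ((γ (2 * k + 2) : ℂ)) ^ 2) with hPe
    set P1 := ∏' j : ℕ, ((1 : ℂ) - ((((b : ℝ) : ℂ) + z) / (2 * π)) ^ 2 / ((j : ℂ) + 1) ^ 2) with hP1d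
    set P2 := ∏' j : ℕ, ((1 : ℂ) - ((((b : ℝ) : ℂ) - z) / (2 * π)) ^ 2 / ((j : ℂ) + 1) ^ 2) with hP2d
    set P3 := ∏' j : ℕ, ((1 : ℂ) - (((b : ℝ) : ℂ) / (2 * π)) ^ 2 / ((j : ℂ) + 1) ^ 2) with hP3d
    have E1 : ((((b : ℝ) : ℂ) + z) / 2 * P1) * (((((b : ℝ) : ℂ) - z) / 2) * P2)
        = (Complex.cos z + (a : ℂ)) / 2 := by rw [hP1, hP2, hsinsin]
    have E3 : (((b : ℝ) : ℂ) / 2 * P3) ^ 2 = (1 + (a : ℂ)) / 2 := by rw [hP3, hsq]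
    apply mul_left_cancel₀ (pow_ne_zero 2 hbne)
    have hx : ((b : ℝ) : ℂ) ^ 2 * (z ^ 2 / ((b : ℝ) : ℂ) ^ 2) = z ^ 2 :=
      mul_div_cancel₀ _ (pow_ne_zero 2 hbne)
    linear_combination (-2 * ((b : ℝ) : ℂ) ^ 2) * E1
      + (((b : ℝ) : ℂ) ^ 2 * (((b : ℝ) : ℂ) ^ 2 - z ^ 2) / 2) * hPP
      + (2 * (((b : ℝ) : ℂ) ^ 2 - z ^ 2) * (Po * Pe)) * E3
      + ((1 : ℂ) + (a : ℂ)) * (Po * Pe) * hx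
end

section
/- Let σ > 0, set a_n = n²π²/σ² for n ≥ 1, and let κ : {1,2,...} → (0,∞) be such that the series Σ_{n≥1} max(κ(n) − a_n, 0)/n² converges. Then there exists a constant C > 0 such that for every real t and every N ≥ 1, ∏_{n=1}^N (1 + t²/a_n²)/(1 + t²/κ(n)²) ≤ C. -/
set_option maxHeartbeats 1000000


open Real Finset

/-- Key product bound: if `Σ_{n≥1} (κ_n - n²π²/σ²)₊ / n² < ∞` and `κ_n > 0`, then the
partial products `∏_{n=1}^N (1 + t²/a_n²)/(1 + t²/κ_n²)` with `a_n = n²π²/σ²` are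
uniformly bounded in `t` and `N`. -/
theorem product_ratio_uniform_bound
    (σ : ℝ) (hσ : 0 < σ) (a : ℕ → ℝ) (ha : ∀ n : ℕ, a n = (n : ℝ) ^ 2 * π ^ 2 / σ ^ 2)
    (κ : ℕ → ℝ) (hκpos : ∀ n : ℕ, 1 ≤ n → 0 < κ n)
    (hsum : Summable fun n : ℕ => max (κ (n + 1) - a (n + 1)) 0 / ((n : ℝ) + 1) ^ 2) :
    ∃ C : ℝ, 0 < C ∧ ∀ t : ℝ, ∀ N : ℕ, 1 ≤ N →
      ∏ n ∈ Finset.Icc 1 N, ((1 + t ^ 2 / (a n) ^ 2) / (1 + t ^ 2 / (κ n) ^ 2)) ≤ C := by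
  have hπ := Real.pi_pos
  set A : ℝ := π ^ 2 / σ ^ 2 with hA
  have hApos : 0 < A := by positivity
  have haform : ∀ n : ℕ, a n = (n : ℝ) ^ 2 * A := by
    intro n; rw [ha n, hA]; ring
  have hapos : ∀ n : ℕ, 1 ≤ n → 0 < a n := by
    intro n hn
    rw [haform]
    have h1 : (1:ℝ) ≤ (n:ℝ) := by exact_mod_cast hn
    have h2 : (0:ℝ) < (n:ℝ)^2 := by nlinarith
    exact mul_pos h2 hApos
  set f : ℕ → ℝ := fun n => max (κ (n + 1) - a (n + 1)) 0 / ((n : ℝ) + 1) ^ 2 with hfdef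
  have hfnonneg : ∀ n, 0 ≤ f n := by
    intro n; apply div_nonneg (le_max_right _ _) (by positivity)
  set M : ℝ := ∑' n, f n with hM
  have hMnn : 0 ≤ M := tsum_nonneg hfnonneg
  have hfM : ∀ n, f n ≤ M := fun n => Summable.le_tsum hsum n (fun j _ => hfnonneg j)
  -- the per-index excess
  set x : ℕ → ℝ := fun n => max ((κ n) ^ 2 / (a n) ^ 2 - 1) 0 with hx
  have hxnonneg : ∀ n, 0 ≤ x n := fun n => le_max_right _ _
  set K : ℝ := (2 * A + M) / A ^ 2 with hK
  have hKnn : 0 ≤ K := by positivity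
  -- comparison bound
  have hxle : ∀ n : ℕ, x (n + 1) ≤ K * f n := by
    intro n
    have hn1 : (1:ℕ) ≤ n + 1 := Nat.le_add_left 1 n
    have haP : 0 < a (n + 1) := hapos _ hn1
    have hκP : 0 < κ (n + 1) := hκpos _ hn1
    by_cases h : κ (n + 1) ≤ a (n + 1)
    · have : x (n + 1) = 0 := by
        simp only [hx]
        rw [max_eq_right]
        have : (κ (n+1))^2 ≤ (a (n+1))^2 := by nlinarith
        have := div_le_one_of_le₀ this (by positivity)
        linarith
      rw [this]
      exact mul_nonneg hKnn (hfnonneg n)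
    · push_neg at h
      have hfn : f n = (κ (n + 1) - a (n + 1)) / ((n : ℝ) + 1) ^ 2 := by
        simp only [hfdef]
        rw [max_eq_left (by linarith)]
      have hκub : κ (n + 1) - a (n + 1) ≤ M * ((n:ℝ) + 1) ^ 2 := by
        have := hfM n
        rw [hfn] at this
        rw [div_le_iff₀ (by positivity)] at this
        linarith [this]
      have han : a (n + 1) = ((n:ℝ) + 1) ^ 2 * A := by
        rw [haform]; push_cast; ring
      have hx1 : x (n + 1) = (κ (n+1))^2 / (a (n+1))^2 - 1 := by
        simp only [hx]
        rw [max_eq_left]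
        have : (a (n+1))^2 ≤ (κ (n+1))^2 := by nlinarith
        have := (one_le_div (by positivity : (0:ℝ) < (a (n+1))^2)).mpr this
        linarith
      rw [hx1, hfn, han]
      have hm : (0:ℝ) < ((n:ℝ) + 1) ^ 2 := by positivity
      rw [div_sub' (by positivity), div_le_iff₀ (by positivity), hK]
      have hκn2 : κ (n + 1) ≤ (2 * A + M) * ((n:ℝ)+1)^2 - a (n+1) + a (n+1) := by
        nlinarith [hκub]
      -- goal: κ² - (((n+1)²A))² ≤ ((2A+M)/A²) * ((κ - a)/( (n+1)²)) * (((n+1)²A)²)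
      have expand : (2 * A + M) / A ^ 2 * ((κ (n + 1) - ((n:ℝ) + 1) ^ 2 * A) / ((n:ℝ) + 1) ^ 2) * (((n:ℝ) + 1) ^ 2 * A) ^ 2
          = (2 * A + M) * ((n:ℝ)+1)^2 * (κ (n + 1) - ((n:ℝ) + 1) ^ 2 * A) := by
        field_simp
      rw [expand]
      have hsub : 0 ≤ κ (n + 1) - ((n:ℝ) + 1) ^ 2 * A := by rw [← han]; linarith
      have hsum2 : κ (n + 1) + ((n:ℝ) + 1) ^ 2 * A ≤ (2 * A + M) * ((n:ℝ)+1)^2 := by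
        rw [← han]; nlinarith [hκub, han]
      nlinarith [mul_le_mul_of_nonneg_left hsum2 hsub]
  have hxsummable : Summable (fun n => x (n + 1)) := by
    apply Summable.of_nonneg_of_le (fun n => hxnonneg _) hxle
    exact hsum.mul_left K
  refine ⟨Real.exp (∑' n, x (n + 1)), Real.exp_pos _, ?_⟩
  intro t N hN
  -- per-factor bound
  have hfac : ∀ n ∈ Finset.Icc 1 N, (1 + t ^ 2 / (a n) ^ 2) / (1 + t ^ 2 / (κ n) ^ 2) ≤ 1 + x n := by
    intro n hn
    rw [Finset.mem_Icc] at hn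
    have haP : 0 < a n := hapos n hn.1
    have hκP : 0 < κ n := hκpos n hn.1
    have hden : (0:ℝ) < 1 + t ^ 2 / (κ n) ^ 2 := by positivity
    by_cases h : κ n ≤ a n
    · have h1 : t ^ 2 / (a n) ^ 2 ≤ t ^ 2 / (κ n) ^ 2 := by
        apply div_le_div_of_nonneg_left (by positivity) (by positivity)
        nlinarith
      have : (1 + t ^ 2 / (a n) ^ 2) / (1 + t ^ 2 / (κ n) ^ 2) ≤ 1 :=
        div_le_one_of_le₀ (by linarith) (by linarith)
      linarith [hxnonneg n]
    · push_neg at h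
      have hx1 : 1 + x n = (κ n)^2 / (a n)^2 := by
        simp only [hx]
        rw [max_eq_left]
        · ring
        have : (a n)^2 ≤ (κ n)^2 := by nlinarith
        have := (one_le_div (by positivity : (0:ℝ) < (a n)^2)).mpr this
        linarith
      rw [hx1, div_le_div_iff₀ hden (by positivity)]
      have e1 : (1 + t ^ 2 / (a n) ^ 2) * (a n)^2 = (a n)^2 + t^2 := by
        field_simp
      have e2 : (κ n)^2 * (1 + t ^ 2 / (κ n) ^ 2) = (κ n)^2 + t^2 := by
        field_simp
      rw [e1, e2]
      nlinarith
  calc ∏ n ∈ Finset.Icc 1 N, ((1 + t ^ 2 / (a n) ^ 2) / (1 + t ^ 2 / (κ n) ^ 2))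
      ≤ ∏ n ∈ Finset.Icc 1 N, (1 + x n) := by
        apply Finset.prod_le_prod
        · intro n hn
          apply div_nonneg (by positivity) (by positivity)
        · exact hfac
    _ ≤ ∏ n ∈ Finset.Icc 1 N, Real.exp (x n) := by
        apply Finset.prod_le_prod
        · intro n hn; linarith [hxnonneg n]
        · intro n hn; linarith [Real.add_one_le_exp (x n)]
    _ = Real.exp (∑ n ∈ Finset.Icc 1 N, x n) := (Real.exp_sum _ _).symm
    _ ≤ Real.exp (∑' n, x (n + 1)) := by
        apply Real.exp_le_exp.mpr
        rw [← Finset.Ico_add_one_right_eq_Icc, Finset.sum_Ico_eq_sum_range]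
        simp only [Nat.add_sub_cancel_left, Nat.succ_sub_one, Nat.add_sub_cancel]
        calc ∑ i ∈ Finset.range N, x (1 + i)
            = ∑ i ∈ Finset.range N, x (i + 1) := by
              apply Finset.sum_congr rfl; intro i _; rw [Nat.add_comm]
          _ ≤ ∑' n, x (n + 1) := Summable.sum_le_tsum _ (fun i _ => hxnonneg _) hxsummable
end
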